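/- arXiv:2303.17172 — 6 statements merged into one kernel-verified Lean document; each statement's English description precedes it below -/
import Mathlib

section
/- If C is a linear code over F_q all of whose nonzero codeword weights are divisible by Δ, where q divides Δ, and H is a hyperplane of the ambient projective space, then the restriction of the associated multiset of points to H is (Δ/q)-divisible; equivalently, in geometric terms: if M is a multiset of points in PG(v-1,q) with M(H') ≡ |M| (mod Δ) for all hyperplanes H', then the restricted multiset M|_H satisfies M|_H(S) ≡ M(H) (mod Δ/q) for every hyperplane S of H. -/
open scoped Classical

noncomputable def MVal {F V : Type*} [Field F] [AddCommGroup V] [Module F V]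
    (M : Projectivization F V → ℕ) (K : Submodule F V) : ℕ :=
  ∑ᶠ P ∈ {P : Projectivization F V | P.submodule ≤ K}, M P

def IsDivisible {F V : Type*} [Field F] [AddCommGroup V] [Module F V] (Δ : ℕ)
    (M : Projectivization F V → ℕ) : Prop :=
  ∀ H : Submodule F V, Module.finrank F H + 1 = Module.finrank F V →
    MVal M H ≡ MVal M ⊤ [MOD Δ]

def IsSpanning {F V : Type*} [Field F] [AddCommGroup V] [Module F V]
    (M : Projectivization F V → ℕ) : Prop :=
  (⨆ P ∈ {P : Projectivization F V | 0 < M P}, P.submodule) = ⊤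

def gaussNum (q k : ℕ) : ℕ := ∑ i ∈ Finset.range k, q ^ i

def IsProjBase {F V : Type*} [Field F] [AddCommGroup V] [Module F V]
    (n : ℕ) (B : Finset (Projectivization F V)) : Prop :=
  B.card = n ∧ ∀ T ⊆ B, T.card = n - 1 →
    Module.finrank F ((⨆ P ∈ T, Projectivization.submodule P) : Submodule F V) = n - 1

section AuxL

variable {F V : Type*} [Field F] [AddCommGroup V] [Module F V]

instance projFinite [Finite V] : Finite (Projectivization F V) :=
  Quotient.finite _

lemma MVal_eq_sum [Fintype (Projectivization F V)] (M : Projectivization F V → ℕ)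
    (K : Submodule F V) :
    MVal M K = ∑ P : Projectivization F V, (if P.submodule ≤ K then M P else 0) := by
  classical
  rw [MVal, finsum_mem_eq_finite_toFinset_sum _ (Set.toFinite _)]
  rw [show (Set.toFinite {P : Projectivization F V | P.submodule ≤ K}).toFinset
      = Finset.univ.filter (fun P : Projectivization F V => P.submodule ≤ K) by
    ext P; simp]
  rw [Finset.sum_filter]

lemma card_proj_two [Fintype F] {W : Type*} [AddCommGroup W] [Module F W] [Finite W]
    (h2 : Module.finrank F W = 2) :
    Nat.card (Projectivization F W) = Fintype.card F + 1 := by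
  classical
  letI : Fintype W := Fintype.ofFinite _
  letI : Fintype (Projectivization F W) := Fintype.ofFinite _
  have hq2 : 2 ≤ Fintype.card F := Fintype.one_lt_card
  have hcW : Fintype.card W = Fintype.card F ^ 2 := by
    rw [Module.card_eq_pow_finrank (K := F), h2]
  have hnz : Fintype.card {w : W // w ≠ 0} = Fintype.card F ^ 2 - 1 := by
    have h1 := Fintype.card_subtype_compl (fun w : W => w = 0)
    have h2' : Fintype.card {w : W // w = 0} = 1 := Fintype.card_subtype_eq (0 : W)
    have he : Fintype.card {w : W // w ≠ 0} = Fintype.card {w : W // ¬ w = 0} := rfl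
    rw [he, h1, h2', hcW]
  set f : {w : W // w ≠ 0} → Projectivization F W :=
    fun x => Projectivization.mk F x.1 x.2 with hf
  have hfib : ∀ ℓ : Projectivization F W,
      Fintype.card {x : {w : W // w ≠ 0} // f x = ℓ} = Fintype.card F - 1 := by
    intro ℓ
    have hrep := ℓ.rep_nonzero
    have e : Fˣ ≃ {x : {w : W // w ≠ 0} // f x = ℓ} :=
      { toFun := fun a => ⟨⟨(a : F) • ℓ.rep, smul_ne_zero (Units.ne_zero a) hrep⟩, by
          show Projectivization.mk F ((a : F) • ℓ.rep) _ = ℓ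
          conv_rhs => rw [← Projectivization.mk_rep ℓ]
          exact (Projectivization.mk_eq_mk_iff F _ _ _ hrep).mpr ⟨a, rfl⟩⟩
        invFun := fun x => Classical.choose
          ((Projectivization.mk_eq_mk_iff F x.1.1 ℓ.rep x.1.2 hrep).mp (by
            rw [show Projectivization.mk F x.1.1 x.1.2 = f x.1 from rfl,
              x.2, Projectivization.mk_rep]))
        left_inv := by
          intro a
          apply Units.ext
          apply smul_left_injective F hrep
          have h := Classical.choose_spec ((Projectivization.mk_eq_mk_iff F
            ((a : F) • ℓ.rep) ℓ.rep (smul_ne_zero (Units.ne_zero a) hrep) hrep).mp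
            ((Projectivization.mk_eq_mk_iff F _ _ _ hrep).mpr ⟨a, rfl⟩))
          exact h
        right_inv := by
          intro x
          have h := Classical.choose_spec
            ((Projectivization.mk_eq_mk_iff F x.1.1 ℓ.rep x.1.2 hrep).mp (by
              rw [show Projectivization.mk F x.1.1 x.1.2 = f x.1 from rfl,
                x.2, Projectivization.mk_rep]))
          apply Subtype.ext; apply Subtype.ext
          exact h }
    rw [← Fintype.card_congr e, Fintype.card_units]
  have hsum : Fintype.card {w : W // w ≠ 0}
      = Fintype.card (Projectivization F W) * (Fintype.card F - 1) := by
    rw [← Fintype.card_congr (Equiv.sigmaFiberEquiv f), Fintype.card_sigma,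
      Finset.sum_congr rfl (fun ℓ _ => hfib ℓ), Finset.sum_const, smul_eq_mul,
      Finset.card_univ]
  rw [hnz] at hsum
  have key : ∀ n : ℕ, 2 ≤ n → (n + 1) * (n - 1) = n ^ 2 - 1 := by
    intro n hn
    obtain ⟨r, rfl⟩ : ∃ r, n = r + 2 := ⟨n - 2, by omega⟩
    have h0 : (r + 2) ^ 2 = r * r + 4 * r + 4 := by ring
    rw [h0]
    have h2 : (r + 2 + 1) * (r + 2 - 1) = (r + 3) * (r + 1) := by norm_num
    rw [h2]
    have : (r + 3) * (r + 1) = r * r + 4 * r + 3 := by ring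
    omega
  rw [Nat.card_eq_fintype_card]
  have hpos : 0 < Fintype.card F - 1 := by omega
  apply Nat.eq_of_mul_eq_mul_right hpos
  rw [← hsum, key _ hq2]

end AuxL

theorem stmt_0 {F : Type*} [Field F] [Fintype F] (q v Δ : ℕ)
    (hq : Fintype.card F = q) (hqΔ : q ∣ Δ)
    (M : Projectivization F (Fin v → F) → ℕ)
    (hdiv : IsDivisible Δ M)
    (H : Submodule F (Fin v → F)) (hH : Module.finrank F H + 1 = v) :
    ∀ S : Submodule F (Fin v → F), S ≤ H →
      Module.finrank F S + 1 = Module.finrank F H →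
      MVal (fun P => if P.submodule ≤ H then M P else 0) S ≡ MVal M H [MOD Δ / q] := by
  intro S hSH hS
  classical
  have hV : Module.finrank F (Fin v → F) = v := Module.finrank_fin_fun F
  -- Step A: the restriction agrees with M on points of S
  have hres : MVal (fun P => if P.submodule ≤ H then M P else 0) S = MVal M S := by
    apply finsum_mem_congr rfl
    intro P hP
    exact if_pos (le_trans hP hSH)
  -- quotient space
  set W := (Fin v → F) ⧸ S with hWdef
  haveI : Finite W := Finite.of_surjective _ S.mkQ_surjective
  have hW2 : Module.finrank F W = 2 := by
    have h : Module.finrank F W + Module.finrank F S = Module.finrank F (Fin v → F) :=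
      Submodule.finrank_quotient_add_finrank S
    rw [hV] at h; omega
  letI : Fintype (Projectivization F (Fin v → F)) := Fintype.ofFinite _
  letI : Fintype (Projectivization F W) := Fintype.ofFinite _
  set N := Fintype.card (Projectivization F W) with hN
  have hNq : N = q + 1 := by
    rw [hN, ← Nat.card_eq_fintype_card, card_proj_two hW2, hq]
  set Kl : Projectivization F W → Submodule F (Fin v → F) :=
    fun ℓ => ℓ.submodule.comap S.mkQ with hKl
  have hSKl : ∀ ℓ, S ≤ Kl ℓ := by
    intro ℓ x hx
    have : S.mkQ x = 0 := by
      rw [Submodule.mkQ_apply]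
      exact (Submodule.Quotient.mk_eq_zero S).mpr hx
    simp only [hKl, Submodule.mem_comap, this]
    exact zero_mem _
  have hrankKl : ∀ ℓ : Projectivization F W, Module.finrank F (Kl ℓ) + 1 = v := by
    intro ℓ
    have hmap : (Kl ℓ).map S.mkQ = ℓ.submodule :=
      Submodule.map_comap_eq_of_surjective S.mkQ_surjective _
    have e := Submodule.quotientQuotientEquivQuotient S (Kl ℓ) (hSKl ℓ)
    have h1 : Module.finrank F ((Fin v → F) ⧸ Kl ℓ)
        = Module.finrank F (W ⧸ (Kl ℓ).map S.mkQ) := (LinearEquiv.finrank_eq e).symm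
    have h2 : Module.finrank F (W ⧸ ℓ.submodule) + Module.finrank F ℓ.submodule = 2 := by
      rw [Submodule.finrank_quotient_add_finrank, hW2]
    have h3 : Module.finrank F ℓ.submodule = 1 := ℓ.finrank_submodule
    have h4 := Submodule.finrank_quotient_add_finrank (Kl ℓ)
    rw [hV] at h4
    rw [hmap] at h1
    omega
  have hmem : ∀ (P : Projectivization F (Fin v → F)) (ℓ : Projectivization F W),
      P.submodule ≤ Kl ℓ ↔ P.submodule.map S.mkQ ≤ ℓ.submodule :=
    fun P ℓ => Submodule.map_le_iff_le_comap.symm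
  have huniq : ∀ P : Projectivization F (Fin v → F), ¬ P.submodule ≤ S →
      ∃! ℓ : Projectivization F W, P.submodule ≤ Kl ℓ := by
    intro P hP
    have hrepS : P.rep ∉ S := by
      intro h
      apply hP
      rw [Projectivization.submodule_eq]
      exact (Submodule.span_singleton_le_iff_mem _ _).mpr h
    have hw0 : S.mkQ P.rep ≠ 0 := by
      intro h
      rw [Submodule.mkQ_apply] at h
      exact hrepS ((Submodule.Quotient.mk_eq_zero S).mp h)
    have hmapP : P.submodule.map S.mkQ = Submodule.span F {S.mkQ P.rep} := by
      rw [Projectivization.submodule_eq, Submodule.map_span, Set.image_singleton]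
    refine ⟨Projectivization.mk F (S.mkQ P.rep) hw0, ?_, ?_⟩
    · show P.submodule ≤ Kl (Projectivization.mk F (S.mkQ P.rep) hw0)
      rw [hmem, hmapP, Projectivization.submodule_mk]
    · intro ℓ hℓ
      rw [hmem, hmapP] at hℓ
      have h1 : Submodule.span F {S.mkQ P.rep} = ℓ.submodule := by
        apply Submodule.eq_of_le_of_finrank_eq hℓ
        rw [finrank_span_singleton hw0, ℓ.finrank_submodule]
      apply Projectivization.submodule_injective
      rw [Projectivization.submodule_mk, ← h1]
  -- key double counting identity
  have key : (∑ ℓ : Projectivization F W, MVal M (Kl ℓ)) + MVal M S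
      = N * MVal M S + MVal M ⊤ := by
    simp only [MVal_eq_sum]
    rw [Finset.sum_comm, ← Finset.sum_add_distrib, Finset.mul_sum, ← Finset.sum_add_distrib]
    apply Finset.sum_congr rfl
    intro P _
    by_cases hPS : P.submodule ≤ S
    · have hall : ∀ ℓ, P.submodule ≤ Kl ℓ := fun ℓ => le_trans hPS (hSKl ℓ)
      rw [Finset.sum_congr rfl (fun ℓ _ => if_pos (hall ℓ)), Finset.sum_const,
        if_pos hPS, if_pos le_top, smul_eq_mul, Finset.card_univ]
    · obtain ⟨ℓ0, hℓ0, huq⟩ := huniq P hPS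
      have hiff : ∀ ℓ, (P.submodule ≤ Kl ℓ) ↔ ℓ = ℓ0 :=
        fun ℓ => ⟨fun h => huq ℓ h, fun h => h ▸ hℓ0⟩
      rw [Finset.sum_congr rfl (fun ℓ _ => if_congr (hiff ℓ) rfl rfl),
        Finset.sum_ite_eq' Finset.univ ℓ0 (fun _ => M P),
        if_pos (Finset.mem_univ ℓ0), if_neg hPS, if_pos le_top]
      ring
  have hdivK : ∀ ℓ : Projectivization F W, MVal M (Kl ℓ) ≡ MVal M ⊤ [MOD Δ] :=
    fun ℓ => hdiv _ (by rw [hV]; exact hrankKl ℓ)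
  have hsum : (∑ ℓ : Projectivization F W, MVal M (Kl ℓ)) ≡ N * MVal M ⊤ [MOD Δ] := by
    have h0 : N * MVal M ⊤ = ∑ _ℓ : Projectivization F W, MVal M ⊤ := by
      rw [Finset.sum_const, smul_eq_mul, Finset.card_univ]
    rw [h0]
    unfold Nat.ModEq
    rw [Finset.sum_nat_mod, Finset.sum_congr rfl (fun ℓ _ => hdivK ℓ), ← Finset.sum_nat_mod]
  have h5 : N * MVal M ⊤ + MVal M S ≡ N * MVal M S + MVal M ⊤ [MOD Δ] := by
    calc N * MVal M ⊤ + MVal M S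
        ≡ (∑ ℓ : Projectivization F W, MVal M (Kl ℓ)) + MVal M S [MOD Δ] :=
          (hsum.add_right _).symm
      _ = N * MVal M S + MVal M ⊤ := key
  have h6 : q * MVal M ⊤ ≡ q * MVal M S [MOD Δ] := by
    have e1 : N * MVal M ⊤ + MVal M S = q * MVal M ⊤ + (MVal M ⊤ + MVal M S) := by
      rw [hNq]; ring
    have e2 : N * MVal M S + MVal M ⊤ = q * MVal M S + (MVal M ⊤ + MVal M S) := by
      rw [hNq]; ring
    rw [e1, e2] at h5
    exact Nat.ModEq.add_right_cancel' _ h5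
  have hq0 : 0 < q := by rw [← hq]; exact Fintype.card_pos
  have h7 : MVal M ⊤ ≡ MVal M S [MOD Δ / q] := by
    have hΔ : q * (Δ / q) = Δ := Nat.mul_div_cancel' hqΔ
    rw [← hΔ] at h6
    unfold Nat.ModEq at h6 ⊢
    rw [Nat.mul_mod_mul_left, Nat.mul_mod_mul_left] at h6
    exact Nat.eq_of_mul_eq_mul_left hq0 h6
  have h8 : MVal M H ≡ MVal M ⊤ [MOD Δ / q] :=
    (hdiv H (by rw [hV]; exact hH)).of_dvd (Nat.div_dvd_of_dvd hqΔ)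
  rw [hres]
  exact h7.symm.trans h8.symm
end

section
/- Let r ≥ 1 and let M be a 2^r-divisible multiset of points in PG(v-1,2) of cardinality 2^{r+1}. Then either M = 2^{r+1}·χ_P for a single point P, or there exist subspaces E ≤ K with r+1 ≥ dim(E) = dim(K)-1 ≥ 1 such that M = 2^{r+1-dim(E)}·(χ_K - χ_E), i.e., M is a suitable multiple of the characteristic function of an affine subspace K∖E. -/
open scoped Classical

namespace Aux4

variable {v : ℕ}

abbrev Vc (v : ℕ) := Fin v → ZMod 2

def sgn : ZMod 2 → ℤ := fun a => if a = 0 then 1 else -1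

lemma sgn_add : ∀ a b : ZMod 2, sgn (a + b) = sgn a * sgn b := by decide

lemma zmod2_ne_zero {a : ZMod 2} (h : a ≠ 0) : a = 1 := by revert h; revert a; decide

def phi (y : Vc v) : Vc v →ₗ[ZMod 2] ZMod 2 :=
  ∑ i, y i • (LinearMap.proj i : Vc v →ₗ[ZMod 2] ZMod 2)

lemma phi_apply (y x : Vc v) : phi y x = ∑ i, y i * x i := by
  simp [phi, LinearMap.sum_apply, LinearMap.proj_apply, smul_eq_mul]

lemma phi_add_left (y y' x : Vc v) : phi (y + y') x = phi y x + phi y' x := by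
  simp [phi_apply, add_mul, Finset.sum_add_distrib]

lemma phi_zero_left (x : Vc v) : phi 0 x = 0 := by simp [phi_apply]

lemma char2_add_self (x : Vc v) : x + x = 0 := by
  funext i; exact CharTwo.add_self_eq_zero _

lemma phi_single (i : Fin v) (x : Vc v) : phi (Pi.single i 1) x = x i := by
  rw [phi_apply, Finset.sum_eq_single i]
  · simp
  · intro j _ hj; simp [Pi.single_apply, hj]
  · simp

lemma phi_single_right (y : Vc v) (i : Fin v) : phi y (Pi.single i 1) = y i := by
  rw [phi_apply, Finset.sum_eq_single i]
  · simp
  · intro j _ hj; simp [Pi.single_apply, hj]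
  · simp

lemma finrank_ker_phi {y : Vc v} (hy : y ≠ 0) :
    Module.finrank (ZMod 2) (LinearMap.ker (phi y)) + 1 = v := by
  obtain ⟨i, hi⟩ : ∃ i, y i ≠ 0 := by
    by_contra h; push_neg at h; exact hy (funext h)
  have hrange : LinearMap.range (phi y) = ⊤ := by
    rw [eq_top_iff]
    intro a _
    refine ⟨a • Pi.single i 1, ?_⟩
    rw [map_smul, phi_single_right, zmod2_ne_zero hi, smul_eq_mul, mul_one]
  have h1 := LinearMap.finrank_range_add_finrank_ker (phi y)
  rw [hrange, finrank_top, Module.finrank_self] at h1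
  rw [Nat.add_comm] at h1
  rw [h1]
  simp [Module.finrank_pi]

lemma sum_sgn_phi_eq_zero {x : Vc v} (hx : x ≠ 0) :
    ∑ y : Vc v, sgn (phi y x) = 0 := by
  obtain ⟨i, hi⟩ : ∃ i, x i ≠ 0 := by
    by_contra h; push_neg at h; exact hx (funext h)
  have hxi : x i = 1 := zmod2_ne_zero hi
  set c : Vc v := Pi.single i 1 with hc
  have key : ∑ y : Vc v, sgn (phi y x) = ∑ y : Vc v, sgn (phi (y + c) x) :=
    (Fintype.sum_equiv (Equiv.addRight c) _ _ (fun y => rfl)).symm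
  have hstep : ∀ y : Vc v, sgn (phi (y + c) x) = - sgn (phi y x) := by
    intro y
    rw [phi_add_left, sgn_add, phi_single, hxi]
    simp [sgn]
  simp_rw [hstep] at key
  rw [Finset.sum_neg_distrib] at key
  linarith

lemma card_Vc : Fintype.card (Vc v) = 2 ^ v := by simp [Fintype.card_fun]

lemma sum_sgn_phi (x : Vc v) :
    ∑ y : Vc v, sgn (phi y x) = if x = 0 then (2:ℤ)^v else 0 := by
  by_cases h : x = 0
  · subst h
    rw [if_pos rfl]
    have h1 : ∀ y : Vc v, sgn (phi y 0) = 1 := fun y => by rw [map_zero]; rfl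
    simp_rw [h1]
    rw [Finset.sum_const, Finset.card_univ, card_Vc]
    simp
  · rw [if_neg h]; exact sum_sgn_phi_eq_zero h

lemma inversion (m : Vc v → ℤ) (x : Vc v) :
    ∑ y : Vc v, sgn (phi y x) * (∑ z, sgn (phi y z) * m z) = 2^v * m x := by
  have step1 : ∀ y : Vc v, sgn (phi y x) * (∑ z, sgn (phi y z) * m z)
      = ∑ z, sgn (phi y (x + z)) * m z := by
    intro y
    rw [Finset.mul_sum]
    refine Finset.sum_congr rfl fun z _ => ?_
    rw [map_add, sgn_add]; ring
  simp_rw [step1]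
  rw [Finset.sum_comm]
  have step2 : ∀ z : Vc v, ∑ y : Vc v, sgn (phi y (x + z)) * m z
      = (if x + z = 0 then (2:ℤ)^v else 0) * m z := by
    intro z
    rw [← Finset.sum_mul, sum_sgn_phi]
  simp_rw [step2]
  rw [Finset.sum_eq_single x]
  · simp [char2_add_self]
  · intro z _ hz
    rw [if_neg, zero_mul]
    intro hc
    apply hz
    have h2 : x + (x + z) = x + 0 := by rw [hc]
    rwa [← add_assoc, char2_add_self, zero_add, add_zero] at h2
  · intro h; exact absurd (Finset.mem_univ x) h

lemma sum_sgn_subgroup {S : Finset (Vc v)} (hadd : ∀ a ∈ S, ∀ b ∈ S, a + b ∈ S)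
    {x s₀ : Vc v} (hs₀ : s₀ ∈ S) (h1 : phi s₀ x = 1) :
    ∑ s ∈ S, sgn (phi s x) = 0 := by
  have key : ∑ s ∈ S, sgn (phi s x) = ∑ s ∈ S, sgn (phi (s + s₀) x) := by
    refine (Finset.sum_nbij' (fun s => s + s₀) (fun s => s + s₀) ?_ ?_ ?_ ?_ ?_).symm
    · intro a ha; exact hadd a ha s₀ hs₀
    · intro a ha; exact hadd a ha s₀ hs₀
    · intro a _; show a + s₀ + s₀ = a; rw [add_assoc, char2_add_self, add_zero]
    · intro a _; show a + s₀ + s₀ = a; rw [add_assoc, char2_add_self, add_zero]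
    · intro a _; rfl
  have hstep : ∀ s : Vc v, sgn (phi (s + s₀) x) = - sgn (phi s x) := by
    intro s
    rw [phi_add_left, sgn_add, h1]
    simp [sgn]
  simp_rw [hstep] at key
  rw [Finset.sum_neg_distrib] at key
  linarith

lemma mhat_split (m : Vc v → ℤ) (y : Vc v) :
    ∑ x, sgn (phi y x) * m x
      = 2 * (∑ x ∈ Finset.univ.filter (fun x => phi y x = 0), m x) - ∑ x, m x := by
  classical
  rw [← Finset.sum_filter_add_sum_filter_not Finset.univ (fun x => phi y x = 0)
    (fun x => sgn (phi y x) * m x),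
    ← Finset.sum_filter_add_sum_filter_not Finset.univ (fun x => phi y x = 0) m]
  have h1 : ∀ x ∈ Finset.univ.filter (fun x => phi y x = 0),
      sgn (phi y x) * m x = m x := by
    intro x hx
    simp only [Finset.mem_filter] at hx
    rw [hx.2]; simp [sgn]
  have h2 : ∀ x ∈ Finset.univ.filter (fun x => ¬ phi y x = 0),
      sgn (phi y x) * m x = - m x := by
    intro x hx
    simp only [Finset.mem_filter] at hx
    simp [sgn, hx.2]
  rw [Finset.sum_congr rfl h1, Finset.sum_congr rfl h2, Finset.sum_neg_distrib]
  ring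

lemma max_case {m : Vc v → ℤ} (hnn : ∀ x, 0 ≤ m x) {y : Vc v}
    (h : ∑ x, sgn (phi y x) * m x = ∑ x, m x) :
    ∀ x, m x ≠ 0 → phi y x = 0 := by
  have hz : ∑ x, (m x - sgn (phi y x) * m x) = 0 := by
    rw [Finset.sum_sub_distrib, h, sub_self]
  have hterm : ∀ x ∈ Finset.univ, (0:ℤ) ≤ m x - sgn (phi y x) * m x := by
    intro x _
    have : sgn (phi y x) ≤ 1 := by unfold sgn; split <;> norm_num
    nlinarith [hnn x]
  intro x hx
  have h0 := (Finset.sum_eq_zero_iff_of_nonneg hterm).1 hz x (Finset.mem_univ x)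
  by_contra hne
  have ht : m x - sgn (phi y x) * m x = 2 * m x := by
    simp [sgn, hne]; ring
  rw [ht] at h0
  omega

lemma min_case {m : Vc v → ℤ} (hnn : ∀ x, 0 ≤ m x) {y : Vc v}
    (h : ∑ x, sgn (phi y x) * m x = - ∑ x, m x) :
    ∀ x, m x ≠ 0 → phi y x = 1 := by
  have hz : ∑ x, (m x + sgn (phi y x) * m x) = 0 := by
    rw [Finset.sum_add_distrib, h]; ring
  have hterm : ∀ x ∈ Finset.univ, (0:ℤ) ≤ m x + sgn (phi y x) * m x := by
    intro x _
    have : -1 ≤ sgn (phi y x) := by unfold sgn; split <;> norm_num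
    nlinarith [hnn x]
  intro x hx
  have h0 := (Finset.sum_eq_zero_iff_of_nonneg hterm).1 hz x (Finset.mem_univ x)
  by_cases hne : phi y x = 0
  · rw [hne] at h0; simp [sgn] at h0; omega
  · exact zmod2_ne_zero hne

lemma mk_inj {a b : Vc v} (ha : a ≠ 0) (hb : b ≠ 0)
    (h : Projectivization.mk (ZMod 2) a ha = Projectivization.mk (ZMod 2) b hb) : a = b := by
  rw [Projectivization.mk_eq_mk_iff] at h
  obtain ⟨u, hu⟩ := h
  have h1 : (u : ZMod 2) = 1 := by
    have := u.ne_zero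
    revert this
    generalize (u : ZMod 2) = w
    revert w; decide
  rw [← hu, Units.smul_def, h1, one_smul]

lemma submodule_le_iff (P : Projectivization (ZMod 2) (Vc v)) (K : Submodule (ZMod 2) (Vc v)) :
    P.submodule ≤ K ↔ P.rep ∈ K := by
  conv_lhs => rw [← P.mk_rep]
  rw [Projectivization.submodule_mk, Submodule.span_singleton_le_iff_mem]

noncomputable def Mv (M : Projectivization (ZMod 2) (Vc v) → ℕ) (x : Vc v) : ℕ :=
  if h : x = 0 then 0 else M (Projectivization.mk (ZMod 2) x h)

instance : Finite (Projectivization (ZMod 2) (Vc v)) := Quotient.finite _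

lemma Mv_rep (M : Projectivization (ZMod 2) (Vc v) → ℕ) (P : Projectivization (ZMod 2) (Vc v)) :
    Mv M P.rep = M P := by
  rw [Mv, dif_neg (Projectivization.rep_nonzero P), P.mk_rep]

lemma MVal_eq (M : Projectivization (ZMod 2) (Vc v) → ℕ) (K : Submodule (ZMod 2) (Vc v)) :
    MVal M K = ∑ x : Vc v, if x ∈ K then Mv M x else 0 := by
  classical
  have hfin : {P : Projectivization (ZMod 2) (Vc v) | P.submodule ≤ K}.Finite :=
    Set.toFinite _
  rw [MVal, finsum_mem_eq_finite_toFinset_sum _ hfin]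
  have step1 : ∀ x : Vc v, (if x ∈ K then Mv M x else 0)
      = (if x ∈ K ∧ x ≠ 0 then Mv M x else 0) := by
    intro x
    by_cases h0 : x = 0
    · subst h0; simp [Mv]
    · simp [h0]
  simp_rw [step1, ← Finset.sum_filter]
  refine Finset.sum_bij (fun P _ => P.rep) ?_ ?_ ?_ ?_
  · intro P hP
    simp only [Set.Finite.mem_toFinset, Set.mem_setOf_eq] at hP
    simp only [Finset.mem_filter, Finset.mem_univ, true_and]
    exact ⟨(submodule_le_iff P K).1 hP, Projectivization.rep_nonzero P⟩
  · intro P hP Q hQ h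
    rw [← P.mk_rep, ← Q.mk_rep]
    congr 1
  · intro x hx
    simp only [Finset.mem_filter, Finset.mem_univ, true_and] at hx
    refine ⟨Projectivization.mk (ZMod 2) x hx.2, ?_, ?_⟩
    · simp only [Set.Finite.mem_toFinset, Set.mem_setOf_eq, Projectivization.submodule_mk,
        Submodule.span_singleton_le_iff_mem]
      exact hx.1
    · exact mk_inj (Projectivization.rep_nonzero _) hx.2
        (Projectivization.mk_rep (Projectivization.mk (ZMod 2) x hx.2))
  · intro P hP
    rw [Mv, dif_neg (Projectivization.rep_nonzero P), P.mk_rep]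

end Aux4
open scoped Classical
open Aux4

set_option maxHeartbeats 1600000 in
set_option synthInstance.maxHeartbeats 400000 in
theorem stmt_4 (v r : ℕ) (hr : 1 ≤ r)
    (M : Projectivization (ZMod 2) (Fin v → ZMod 2) → ℕ)
    (hdiv : IsDivisible (2 ^ r) M)
    (hcard : MVal M ⊤ = 2 ^ (r + 1)) :
    (∃ P, ∀ Q, M Q = if Q = P then 2 ^ (r + 1) else 0) ∨
    (∃ E K : Submodule (ZMod 2) (Fin v → ZMod 2), E ≤ K ∧
      Module.finrank (ZMod 2) E + 1 = Module.finrank (ZMod 2) K ∧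
      1 ≤ Module.finrank (ZMod 2) E ∧ Module.finrank (ZMod 2) E ≤ r + 1 ∧
      ∀ P, M P = if P.submodule ≤ K ∧ ¬ P.submodule ≤ E
        then 2 ^ (r + 1 - Module.finrank (ZMod 2) E) else 0) := by
  classical
  set m : Vc v → ℤ := fun x => (Mv M x : ℤ) with hm
  have hmnn : ∀ x, 0 ≤ m x := fun x => Int.natCast_nonneg _
  have hm0 : m 0 = 0 := by simp [hm, Mv]
  -- total sum
  have hsumN : ∑ x : Vc v, Mv M x = 2^(r+1) := by
    have h := MVal_eq M ⊤
    rw [hcard] at h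
    simpa using h.symm
  have hsum : ∑ x : Vc v, m x = 2^(r+1) := by
    rw [hm, ← Nat.cast_sum, hsumN]
    push_cast
    ring
  set mhat : Vc v → ℤ := fun y => ∑ x, sgn (phi y x) * m x with hmhat
  -- divisibility of Fourier coefficients
  have hdvd : ∀ y : Vc v, y ≠ 0 → (2:ℤ)^(r+1) ∣ mhat y := by
    intro y hy
    have hker := finrank_ker_phi hy
    have hfr : Module.finrank (ZMod 2) (Fin v → ZMod 2) = v := by
      simp [Module.finrank_pi]
    have hmod := hdiv (LinearMap.ker (phi y)) (by rw [hker, hfr])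
    rw [hcard] at hmod
    have hdd : ((2:ℤ))^r ∣ (2:ℤ)^(r+1) - (MVal M (LinearMap.ker (phi y)) : ℤ) := by
      have h2 := hmod.dvd
      push_cast at h2 ⊢
      convert h2 using 2
    have hMK : (MVal M (LinearMap.ker (phi y)) : ℤ)
        = ∑ x ∈ Finset.univ.filter (fun x => phi y x = 0), m x := by
      rw [MVal_eq]
      push_cast
      rw [Finset.sum_filter]
      refine Finset.sum_congr rfl fun x _ => ?_
      simp [LinearMap.mem_ker, hm]
    have hsplit := mhat_split m y
    rw [← hMK] at hsplit
    rw [hsum] at hsplit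
    obtain ⟨t, ht⟩ := hdd
    refine ⟨1 - t, ?_⟩
    show mhat y = _
    rw [hmhat]
    simp only []
    rw [hsplit]
    have hA : (MVal M (LinearMap.ker (phi y)) : ℤ) = 2^(r+1) - 2^r * t := by linarith
    rw [hA]
    ring
  -- bound
  have hbound : ∀ y : Vc v, |mhat y| ≤ 2^(r+1) := by
    intro y
    calc |mhat y| ≤ ∑ x, |sgn (phi y x) * m x| := Finset.abs_sum_le_sum_abs _ _
    _ = ∑ x, m x := by
        refine Finset.sum_congr rfl fun x _ => ?_
        rw [abs_mul]
        have h1 : |sgn (phi y x)| = 1 := by unfold sgn; split <;> norm_num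
        rw [h1, one_mul, abs_of_nonneg (hmnn x)]
    _ = 2^(r+1) := hsum
  -- the sets S and T
  set S : Finset (Vc v) := Finset.univ.filter (fun y => ∀ x, m x ≠ 0 → phi y x = 0) with hS
  set T : Finset (Vc v) := Finset.univ.filter (fun y => ∀ x, m x ≠ 0 → phi y x = 1) with hT
  have hmemS : ∀ y, y ∈ S ↔ ∀ x, m x ≠ 0 → phi y x = 0 := by
    intro y; rw [hS]; simp
  have hmemT : ∀ y, y ∈ T ↔ ∀ x, m x ≠ 0 → phi y x = 1 := by
    intro y; rw [hT]; simp
  have h0S : (0 : Vc v) ∈ S := (hmemS 0).2 (fun x _ => phi_zero_left x)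
  -- a point of support
  have hx₀ : ∃ x₀ : Vc v, m x₀ ≠ 0 := by
    by_contra h
    push_neg at h
    rw [Finset.sum_congr rfl (fun x _ => h x)] at hsum
    simp at hsum
    have : (0:ℤ) < 2^(r+1) := by positivity
    omega
  obtain ⟨x₀, hx₀m⟩ := hx₀
  have hx₀0 : x₀ ≠ 0 := fun h => hx₀m (h ▸ hm0)
  -- mhat values
  have hmhatS : ∀ y ∈ S, mhat y = 2^(r+1) := by
    intro y hy
    rw [hmhat]
    simp only []
    rw [← hsum]
    refine Finset.sum_congr rfl fun x _ => ?_
    by_cases h : m x = 0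
    · rw [h, mul_zero]
    · rw [(hmemS y).1 hy x h]; simp [sgn]
  have hmhatT : ∀ y ∈ T, mhat y = -2^(r+1) := by
    intro y hy
    rw [hmhat]
    simp only []
    rw [← hsum, ← Finset.sum_neg_distrib]
    refine Finset.sum_congr rfl fun x _ => ?_
    by_cases h : m x = 0
    · rw [h]; ring
    · rw [(hmemT y).1 hy x h]; simp [sgn]
  have hmhat0 : ∀ y : Vc v, y ∉ S → y ∉ T → mhat y = 0 := by
    intro y hyS hyT
    have hy0 : y ≠ 0 := fun h => hyS (h ▸ h0S)
    obtain ⟨t, ht⟩ := hdvd y hy0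
    have hb := hbound y
    rw [ht] at hb ⊢
    have hNpos : (0:ℤ) < 2^(r+1) := by positivity
    have habs : |t| ≤ 1 := by
      rw [abs_mul, abs_of_nonneg (le_of_lt hNpos)] at hb
      nlinarith [abs_nonneg t]
    have ht3 : t = -1 ∨ t = 0 ∨ t = 1 := by
      rw [abs_le] at habs; omega
    rcases ht3 with h | h | h
    · exfalso
      apply hyT
      rw [hmemT]
      refine min_case hmnn ?_
      show mhat y = - ∑ x, m x
      rw [ht, h, hsum]; ring
    · rw [h, mul_zero]
    · exfalso
      apply hyS
      rw [hmemS]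
      refine max_case hmnn ?_
      show mhat y = ∑ x, m x
      rw [ht, h, hsum]; ring
  -- disjointness
  have hdisj : Disjoint S T := by
    rw [Finset.disjoint_left]
    intro y hyS hyT
    have h0 := (hmemS y).1 hyS x₀ hx₀m
    have h1 := (hmemT y).1 hyT x₀ hx₀m
    rw [h0] at h1
    exact absurd h1 (by decide)
  -- sum of all mhat is zero
  have hsummhat : ∑ y : Vc v, mhat y = 0 := by
    have h := inversion m 0
    rw [hm0, mul_zero] at h
    rw [← h]
    refine Finset.sum_congr rfl fun y _ => ?_
    rw [map_zero]
    show mhat y = sgn 0 * mhat y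
    simp [sgn]
  -- T is nonempty
  have hTne : T.Nonempty := by
    by_contra h
    rw [Finset.not_nonempty_iff_eq_empty] at h
    have hnn : ∀ y ∈ Finset.univ, (0:ℤ) ≤ mhat y := by
      intro y _
      by_cases hyS : y ∈ S
      · rw [hmhatS y hyS]; positivity
      · rw [hmhat0 y hyS (by rw [h]; exact Finset.notMem_empty y)]
    have := (Finset.sum_eq_zero_iff_of_nonneg hnn).1 hsummhat 0 (Finset.mem_univ 0)
    rw [hmhatS 0 h0S] at this
    have h2 : (0:ℤ) < 2^(r+1) := by positivity
    omega
  obtain ⟨g, hgT⟩ := hTne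
  -- S closed under addition
  have hSadd : ∀ a ∈ S, ∀ b ∈ S, a + b ∈ S := by
    intro a ha b hb
    rw [hmemS]
    intro x hx
    rw [phi_add_left, (hmemS a).1 ha x hx, (hmemS b).1 hb x hx, add_zero]
  -- T = S + g
  have hTiff : ∀ y : Vc v, y ∈ T ↔ y + g ∈ S := by
    intro y
    have hgx : ∀ x, m x ≠ 0 → phi g x = 1 := (hmemT g).1 hgT
    constructor
    · intro hyT
      rw [hmemS]
      intro x hx
      rw [phi_add_left, (hmemT y).1 hyT x hx, hgx x hx]
      decide
    · intro hyS
      rw [hmemT]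
      intro x hx
      have h1 := (hmemS _).1 hyS x hx
      rw [phi_add_left] at h1
      rw [hgx x hx] at h1
      have : phi y x = 0 ∨ phi y x = 1 := by
        rcases eq_or_ne (phi y x) 0 with h | h
        · exact Or.inl h
        · exact Or.inr (zmod2_ne_zero h)
      rcases this with h | h
      · rw [h] at h1; exact absurd h1 (by decide)
      · exact h
  -- key inversion formula
  have hkey : ∀ x : Vc v, 2^v * m x
      = 2^(r+1) * (∑ s ∈ S, sgn (phi s x)) * (1 - sgn (phi g x)) := by
    intro x
    have hinv := inversion m x
    have hzero : ∀ y ∈ Finset.univ, y ∉ S ∪ T → sgn (phi y x) * mhat y = 0 := by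
      intro y _ hy
      rw [Finset.mem_union] at hy
      push_neg at hy
      rw [hmhat0 y hy.1 hy.2, mul_zero]
    have hsub : ∑ y ∈ S ∪ T, sgn (phi y x) * mhat y = ∑ y : Vc v, sgn (phi y x) * mhat y :=
      Finset.sum_subset (Finset.subset_univ _) hzero
    rw [← hsub, Finset.sum_union hdisj] at hinv
    have hSpart : ∑ y ∈ S, sgn (phi y x) * mhat y = 2^(r+1) * ∑ s ∈ S, sgn (phi s x) := by
      rw [Finset.mul_sum]
      refine Finset.sum_congr rfl fun y hy => ?_
      rw [hmhatS y hy]; ring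
    have hTpart : ∑ y ∈ T, sgn (phi y x) * mhat y
        = -2^(r+1) * sgn (phi g x) * ∑ s ∈ S, sgn (phi s x) := by
      have hbij : ∑ y ∈ T, sgn (phi y x) * mhat y = ∑ s ∈ S, sgn (phi (s + g) x) * mhat (s + g) := by
        refine (Finset.sum_nbij' (fun s => s + g) (fun t => t + g) ?_ ?_ ?_ ?_ ?_).symm
        · intro a ha
          rw [hTiff, add_assoc, char2_add_self, add_zero]
          exact ha
        · intro a ha
          exact (hTiff a).1 ha
        · intro a _; show a + g + g = a; rw [add_assoc, char2_add_self, add_zero]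
        · intro a _; show a + g + g = a; rw [add_assoc, char2_add_self, add_zero]
        · intro a _; rfl
      rw [hbij, Finset.mul_sum]
      refine Finset.sum_congr rfl fun s hs => ?_
      have hsT : s + g ∈ T := by
        rw [hTiff, add_assoc, char2_add_self, add_zero]; exact hs
      rw [hmhatT _ hsT, phi_add_left, sgn_add]
      ring
    rw [hSpart, hTpart] at hinv
    rw [← hinv]
    ring
  -- the subspace K'
  set K' : Submodule (ZMod 2) (Vc v) := ⨅ s ∈ S, LinearMap.ker (phi s) with hK'
  have hmemK' : ∀ x : Vc v, x ∈ K' ↔ ∀ s ∈ S, phi s x = 0 := by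
    intro x
    rw [hK']
    simp [Submodule.mem_iInf, LinearMap.mem_ker]
  -- sigma values
  have hσ1 : ∀ x ∈ K', ∑ s ∈ S, sgn (phi s x) = (S.card : ℤ) := by
    intro x hx
    have hone : ∀ s ∈ S, sgn (phi s x) = 1 := fun s hs => by
      rw [(hmemK' x).1 hx s hs]; rfl
    rw [Finset.sum_congr rfl hone, Finset.sum_const]
    simp
  have hσ0 : ∀ x : Vc v, x ∉ K' → ∑ s ∈ S, sgn (phi s x) = 0 := by
    intro x hx
    rw [hmemK'] at hx
    push_neg at hx
    obtain ⟨s₀, hs₀S, hs₀⟩ := hx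
    exact sum_sgn_subgroup hSadd hs₀S (zmod2_ne_zero hs₀)
  have h2vpos : (0:ℤ) < 2^v := by positivity
  -- structure of m
  have hzero1 : ∀ x : Vc v, x ∉ K' → m x = 0 := by
    intro x hx
    have h := hkey x
    rw [hσ0 x hx] at h
    simp at h
    nlinarith [h2vpos, hmnn x]
  have hzero2 : ∀ x : Vc v, phi g x = 0 → m x = 0 := by
    intro x hx
    have h := hkey x
    rw [hx] at h
    have : sgn 0 = 1 := rfl
    rw [this] at h
    simp at h
    nlinarith [h2vpos, hmnn x]
  have hx₀K : x₀ ∈ K' ∧ phi g x₀ = 1 := by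
    constructor
    · by_contra h; exact hx₀m (hzero1 x₀ h)
    · by_contra h
      rcases eq_or_ne (phi g x₀) 0 with h0 | h0
      · exact hx₀m (hzero2 x₀ h0)
      · exact h (zmod2_ne_zero h0)
  have hconst : ∀ x : Vc v, x ∈ K' → phi g x = 1 → m x = m x₀ := by
    intro x hx h1
    have ha := hkey x
    have hb := hkey x₀
    rw [hσ1 x hx, h1] at ha
    rw [hσ1 x₀ hx₀K.1, hx₀K.2] at hb
    rw [← hb] at ha
    exact mul_left_cancel₀ (ne_of_gt h2vpos) ha
  -- ℕ-valued structure
  set c : ℕ := Mv M x₀ with hc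
  have hcpos : 0 < c := by
    refine Nat.pos_of_ne_zero fun h => hx₀m ?_
    show ((Mv M x₀ : ℕ) : ℤ) = 0
    rw [← hc, h]
    simp
  have hform : ∀ x : Vc v, Mv M x = if x ∈ K' ∧ phi g x = 1 then c else 0 := by
    intro x
    by_cases h1 : x ∈ K' ∧ phi g x = 1
    · rw [if_pos h1]
      have h5 : ((Mv M x : ℕ) : ℤ) = ((Mv M x₀ : ℕ) : ℤ) := hconst x h1.1 h1.2
      exact_mod_cast h5
    · rw [if_neg h1]
      push_neg at h1
      by_cases h2 : x ∈ K'
      · have h3 := h1 h2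
        have h4 : phi g x = 0 := by
          rcases eq_or_ne (phi g x) 0 with h | h
          · exact h
          · exact absurd (zmod2_ne_zero h) h3
        have h5 : ((Mv M x : ℕ) : ℤ) = 0 := hzero2 x h4
        exact_mod_cast h5
      · have h5 : ((Mv M x : ℕ) : ℤ) = 0 := hzero1 x h2
        exact_mod_cast h5
  -- the subspace E
  set E : Submodule (ZMod 2) (Vc v) := K' ⊓ LinearMap.ker (phi g) with hE
  have hEK : E ≤ K' := inf_le_left
  have hmemE : ∀ x : Vc v, x ∈ E ↔ x ∈ K' ∧ phi g x = 0 := by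
    intro x; rw [hE]; simp [Submodule.mem_inf, LinearMap.mem_ker]
  set k := Module.finrank (ZMod 2) K' with hk
  set e := Module.finrank (ZMod 2) E with he
  clear hK' hE hS hT hm hmhat hc
  clear_value m mhat S T c K' E
  -- rank-nullity: e + 1 = k
  have he1 : e + 1 = k := by
    set ψ : K' →ₗ[ZMod 2] ZMod 2 := (phi g).comp K'.subtype with hψ
    have hψap : ∀ x : K', ψ x = phi g (x : Vc v) := fun x => rfl
    have hrange : LinearMap.range ψ = ⊤ := by
      rw [eq_top_iff]
      rintro a -
      refine ⟨a • ⟨x₀, hx₀K.1⟩, ?_⟩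
      rw [map_smul, hψap, hx₀K.2, smul_eq_mul, mul_one]
    have hker : LinearMap.ker ψ = E.comap K'.subtype := by
      ext x
      rw [LinearMap.mem_ker, Submodule.mem_comap, hψap, Submodule.subtype_apply, hmemE]
      exact ⟨fun h => ⟨x.2, h⟩, fun h => h.2⟩
    haveI : FiniteDimensional (ZMod 2) (↥K') := FiniteDimensional.finiteDimensional_submodule K'
    have h1 := LinearMap.finrank_range_add_finrank_ker ψ
    rw [hrange, finrank_top, Module.finrank_self, hker] at h1
    have h2 : Module.finrank (ZMod 2) (E.comap K'.subtype) = e := by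
      rw [he]; exact (Submodule.comapSubtypeEquivOfLe hEK).finrank_eq
    rw [h2] at h1
    omega
  -- cardinalities
  have hcardK' : (Finset.univ.filter (fun x : Vc v => x ∈ K')).card = 2^k := by
    rw [← Fintype.card_subtype]
    have h := Module.card_eq_pow_finrank (K := ZMod 2) (V := K')
    rw [ZMod.card] at h
    rw [← hk] at h
    exact h
  have hcardE : (Finset.univ.filter (fun x : Vc v => x ∈ E)).card = 2^e := by
    rw [← Fintype.card_subtype]
    have h := Module.card_eq_pow_finrank (K := ZMod 2) (V := E)
    rw [ZMod.card] at h
    rw [← he] at h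
    exact h
  have hsubEK : Finset.univ.filter (fun x : Vc v => x ∈ E)
      ⊆ Finset.univ.filter (fun x : Vc v => x ∈ K') := by
    intro x hx
    simp only [Finset.mem_filter, Finset.mem_univ, true_and] at hx ⊢
    exact hEK hx
  have hcondE : ∀ x : Vc v, (x ∈ K' ∧ phi g x = 1) ↔ (x ∈ K' ∧ x ∉ E) := by
    intro x
    rw [hmemE]
    constructor
    · rintro ⟨h1, h2⟩
      refine ⟨h1, fun h => ?_⟩
      rw [h2] at h
      exact absurd h.2 (by decide)
    · rintro ⟨h1, h2⟩
      refine ⟨h1, ?_⟩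
      rcases eq_or_ne (phi g x) 0 with h | h
      · exact absurd ⟨h1, h⟩ h2
      · exact zmod2_ne_zero h
  have hDcard : (Finset.univ.filter (fun x : Vc v => x ∈ K' ∧ phi g x = 1)).card
      = 2^k - 2^e := by
    have hD : Finset.univ.filter (fun x : Vc v => x ∈ K' ∧ phi g x = 1)
        = Finset.univ.filter (fun x : Vc v => x ∈ K')
          \ Finset.univ.filter (fun x : Vc v => x ∈ E) := by
      ext x
      simp only [Finset.mem_filter, Finset.mem_univ, true_and, Finset.mem_sdiff]
      exact hcondE x
    rw [hD, Finset.card_sdiff_of_subset hsubEK, hcardK', hcardE]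
  -- the counting identity
  have hsum2 : (2^k - 2^e) * c = 2^(r+1) := by
    have hs : ∑ x : Vc v, Mv M x
        = (Finset.univ.filter (fun x : Vc v => x ∈ K' ∧ phi g x = 1)).card * c := by
      rw [Finset.sum_congr rfl (fun x _ => hform x), ← Finset.sum_filter,
        Finset.sum_const, smul_eq_mul]
    rw [hs, hDcard] at hsumN
    exact hsumN
  have hpow : 2^k - 2^e = 2^e := by
    rw [← he1, pow_succ]
    omega
  rw [hpow] at hsum2
  have he_le : e ≤ r + 1 := by
    have hdvd2 : (2:ℕ)^e ∣ 2^(r+1) := ⟨c, hsum2.symm⟩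
    exact (Nat.pow_dvd_pow_iff_le_right one_lt_two).1 hdvd2
  have hcval : c = 2^(r+1-e) := by
    have h2 : (2:ℕ)^e * 2^(r+1-e) = 2^(r+1) := by
      rw [← pow_add]
      congr 1
      omega
    exact Nat.eq_of_mul_eq_mul_left (Nat.two_pow_pos e) (hsum2.trans h2.symm)
  by_cases he0 : e = 0
  · -- single point case
    left
    have hk1 : k = 1 := by omega
    have hcval' : c = 2^(r+1) := by rw [hcval, he0]; norm_num
    have hspan : (Submodule.span (ZMod 2) {x₀} : Submodule (ZMod 2) (Vc v)) = K' := by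
      apply Submodule.eq_of_le_of_finrank_le
      · rw [Submodule.span_singleton_le_iff_mem]
        exact hx₀K.1
      · rw [finrank_span_singleton hx₀0, ← hk, hk1]
    have hmemonly : ∀ x : Vc v, (x ∈ K' ∧ phi g x = 1) ↔ x = x₀ := by
      intro x
      constructor
      · rintro ⟨h1, h2⟩
        rw [← hspan, Submodule.mem_span_singleton] at h1
        obtain ⟨a, ha⟩ := h1
        have hx0 : x ≠ 0 := by
          intro h
          rw [h, map_zero] at h2
          exact absurd h2.symm (by decide)
        have ha1 : a = 1 := by
          rcases eq_or_ne a 0 with h | h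
          · rw [h, zero_smul] at ha
            exact absurd ha.symm hx0
          · exact zmod2_ne_zero h
        rw [← ha, ha1, one_smul]
      · rintro rfl
        exact ⟨hx₀K.1, hx₀K.2⟩
    refine ⟨Projectivization.mk (ZMod 2) x₀ hx₀0, ?_⟩
    intro Q
    rw [← Mv_rep M Q, hform]
    have hiff : (Q.rep ∈ K' ∧ phi g Q.rep = 1)
        ↔ (Q = Projectivization.mk (ZMod 2) x₀ hx₀0) := by
      rw [hmemonly]
      constructor
      · intro hq
        rw [← Q.mk_rep]
        exact (Projectivization.mk_eq_mk_iff _ _ _ _ _).2 ⟨1, (one_smul _ x₀).trans hq.symm⟩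
      · intro hq
        rw [hq]
        exact mk_inj (Projectivization.rep_nonzero _) hx₀0 (Projectivization.mk_rep _)
    exact if_congr hiff hcval' rfl
  · -- affine subspace case
    right
    refine ⟨E, K', hEK, by rw [← he, ← hk]; exact he1, by rw [← he]; omega,
      by rw [← he]; exact he_le, ?_⟩
    intro P
    rw [← Mv_rep M P, hform, ← he]
    have hcond : (P.rep ∈ K' ∧ phi g P.rep = 1)
        ↔ (P.submodule ≤ K' ∧ ¬ P.submodule ≤ E) := by
      rw [submodule_le_iff, submodule_le_iff]
      exact hcondE P.rep
    exact if_congr hcond hcval rfl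
end

section
/- Let M be a 2-divisible (even) multiset of points in PG(v-1,2) of cardinality 5. Then either M = χ_L + 2·χ_P for a line L and a point P, or M is the characteristic function of a projective base of size 5, i.e., a set of 5 points in a 4-dimensional space such that every 4 of them are linearly independent. -/
open scoped Classical

namespace Stmt5Aux

open Projectivization Submodule Module

abbrev V2 (v : ℕ) := Fin v → ZMod 2
abbrev Pt (v : ℕ) := Projectivization (ZMod 2) (V2 v)

variable {v : ℕ}

noncomputable instance : Fintype (Pt v) := by
  have : Finite (Pt v) := Quotient.finite _
  exact Fintype.ofFinite _

lemma rep_inj : Function.Injective (Projectivization.rep : Pt v → V2 v) := by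
  intro P Q h
  rw [← P.mk_rep, ← Q.mk_rep, Projectivization.mk_eq_mk_iff]
  exact ⟨1, by simp [h]⟩

lemma addself (x : V2 v) : x + x = 0 := by
  have h : ((1 : ZMod 2) + 1) • x = 0 := by
    rw [show ((1 : ZMod 2) + 1) = 0 by decide, zero_smul]
  simpa [add_smul] using h

lemma pair_sum_ne {x y : V2 v} (hx : x ≠ 0) (hxy : x ≠ y) : x + y ≠ 0 := by
  intro h
  exact hxy (add_left_cancel (a := x) (h.trans (addself x).symm)).symm

lemma zmod2_cases : ∀ c : ZMod 2, c = 0 ∨ c = 1 := by decide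

lemma mval_eq_sum (M : Pt v → ℕ) (K : Submodule (ZMod 2) (V2 v)) :
    MVal M K = ∑ P ∈ Finset.univ.filter (fun P : Pt v => P.submodule ≤ K), M P := by
  rw [MVal, ← finsum_mem_coe_finset]
  congr 1
  ext P
  simp

lemma mval_top (M : Pt v → ℕ) : MVal M ⊤ = ∑ P, M P := by
  rw [mval_eq_sum]
  congr 1
  apply Finset.filter_true_of_mem
  intro P _
  exact le_top

lemma key (M : Pt v → ℕ) (hdiv : IsDivisible 2 M) (hcard : MVal M ⊤ = 5) :
    ∑ P : Pt v, (M P : ZMod 2) • P.rep = 0 := by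
  rw [← Module.forall_dual_apply_eq_zero_iff (ZMod 2)]
  intro φ
  rcases eq_or_ne φ 0 with rfl | hφ
  · simp
  have hker : finrank (ZMod 2) (LinearMap.ker φ) + 1 = finrank (ZMod 2) (V2 v) := by
    have hsurj : Function.Surjective φ := by
      rcases DFunLike.ne_iff.mp hφ with ⟨x, hx⟩
      have hx1 : φ x = 1 := by
        rcases zmod2_cases (φ x) with h | h
        · exact absurd h hx
        · exact h
      intro y
      exact ⟨y • x, by rw [map_smul, hx1, smul_eq_mul, mul_one]⟩
    have h1 : LinearMap.range φ = ⊤ := LinearMap.range_eq_top.mpr hsurj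
    have h2 := LinearMap.finrank_range_add_finrank_ker φ
    rw [h1, finrank_top] at h2
    have h3 : finrank (ZMod 2) (ZMod 2) = 1 := finrank_self _
    omega
  have hmod := hdiv _ hker
  rw [hcard] at hmod
  set A : Finset (Pt v) := Finset.univ.filter (fun P : Pt v => φ P.rep = 0) with hA
  have hAval : MVal M (LinearMap.ker φ) = ∑ P ∈ A, M P := by
    rw [mval_eq_sum]
    congr 1
    ext P
    simp [hA, Projectivization.submodule_eq, Submodule.span_singleton_le_iff_mem,
      LinearMap.mem_ker]
  have htot : ∑ P ∈ A, M P + ∑ P ∈ Aᶜ, M P = 5 := by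
    rw [Finset.sum_add_sum_compl, ← mval_top M, hcard]
  have heven : (∑ P ∈ Aᶜ, M P) % 2 = 0 := by
    have h1 : (∑ P ∈ A, M P) % 2 = 1 := by
      have h2 : MVal M (LinearMap.ker φ) % 2 = 5 % 2 := hmod
      rw [hAval] at h2
      omega
    omega
  rw [map_sum, ← Finset.sum_add_sum_compl A]
  have hA0 : ∑ P ∈ A, φ ((M P : ZMod 2) • P.rep) = 0 := by
    refine Finset.sum_eq_zero fun P hP => ?_
    rw [hA, Finset.mem_filter] at hP
    rw [map_smul, hP.2, smul_zero]
  have hA1 : ∑ P ∈ Aᶜ, φ ((M P : ZMod 2) • P.rep) = ((∑ P ∈ Aᶜ, M P : ℕ) : ZMod 2) := by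
    rw [Nat.cast_sum]
    refine Finset.sum_congr rfl fun P hP => ?_
    rw [Finset.mem_compl, hA, Finset.mem_filter] at hP
    have h1 : φ P.rep = 1 := by
      rcases zmod2_cases (φ P.rep) with h | h
      · exact absurd h (by simpa using hP)
      · exact h
    rw [map_smul, h1, smul_eq_mul, mul_one]
  rw [hA0, hA1, zero_add, ZMod.natCast_eq_zero_iff]
  omega

lemma key2 (M : Pt v → ℕ) (hdiv : IsDivisible 2 M) (hcard : MVal M ⊤ = 5) :
    ∑ P ∈ Finset.univ.filter (fun P : Pt v => M P % 2 = 1), P.rep = 0 := by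
  have h := key M hdiv hcard
  rw [← h, Finset.sum_filter]
  refine Finset.sum_congr rfl fun P _ => ?_
  rcases Nat.mod_two_eq_zero_or_one (M P) with h0 | h1
  · rw [if_neg (by omega)]
    rw [show ((M P : ℕ) : ZMod 2) = 0 from
      (ZMod.natCast_eq_zero_iff _ _).mpr (Nat.dvd_of_mod_eq_zero h0), zero_smul]
  · rw [if_pos h1]
    rw [show ((M P : ℕ) : ZMod 2) = 1 by rw [← ZMod.natCast_mod (M P) 2, h1]; norm_num, one_smul]

lemma indep_of_no_zero_sum (s : Finset (V2 v))
    (h : ∀ U ⊆ s, ∑ x ∈ U, x = 0 → U = ∅) :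
    LinearIndependent (ZMod 2) ((↑) : s → V2 v) := by
  rw [Fintype.linearIndependent_iff]
  intro g hg i
  by_contra hgi
  set U : Finset (V2 v) := (s.attach.filter (fun j => g j ≠ 0)).image Subtype.val with hU
  have hsub : U ⊆ s := by
    intro x hx
    rw [hU, Finset.mem_image] at hx
    obtain ⟨j, _, rfl⟩ := hx
    exact j.2
  have hsum : ∑ x ∈ U, x = 0 := by
    rw [hU, Finset.sum_image (fun x _ y _ hxy => Subtype.ext hxy)]
    rw [← hg, Finset.univ_eq_attach]
    rw [← Finset.sum_filter_of_ne (p := fun j => g j ≠ 0)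
      (f := fun j : {x // x ∈ s} => g j • (j : V2 v)) (s := s.attach)
      (fun x _ hx => fun h0 => hx (show g x • (x : V2 v) = 0 by rw [h0, zero_smul]))]
    refine Finset.sum_congr rfl fun j hj => ?_
    rw [Finset.mem_filter] at hj
    rcases zmod2_cases (g j) with h0 | h1
    · exact absurd h0 hj.2
    · rw [h1, one_smul]
  have hemp := h U hsub hsum
  have : (i : V2 v) ∈ U := by
    rw [hU, Finset.mem_image]
    exact ⟨i, Finset.mem_filter.mpr ⟨Finset.mem_attach _ _, hgi⟩, rfl⟩
  rw [hemp] at this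
  exact absurd this (Finset.notMem_empty _)

lemma no_small_zero_sum (s : Finset (Pt v)) (h1 : s.Nonempty) (h2 : s.card ≤ 2)
    (h3 : ∑ P ∈ s, P.rep = 0) : False := by
  have hc := h1.card_pos
  rcases (by omega : s.card = 1 ∨ s.card = 2) with h | h
  · obtain ⟨a, rfl⟩ := Finset.card_eq_one.mp h
    rw [Finset.sum_singleton] at h3
    exact a.rep_nonzero h3
  · obtain ⟨a, b, hab, rfl⟩ := Finset.card_eq_two.mp h
    rw [Finset.sum_pair hab] at h3
    exact pair_sum_ne a.rep_nonzero (fun he => hab (rep_inj he)) h3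

lemma indep5 (S0 : Finset (Pt v)) (h5 : S0.card = 5) (hsum : ∑ P ∈ S0, P.rep = 0)
    (T : Finset (Pt v)) (hT : T ⊆ S0) (hT4 : T.card ≤ 4) :
    LinearIndependent (ZMod 2)
      (Subtype.val : ↥(T.image (Projectivization.rep (K := ZMod 2)) : Finset (V2 v)) → V2 v) := by
  apply indep_of_no_zero_sum
  intro U hU hUsum
  by_contra hne
  have hUne : U.Nonempty := Finset.nonempty_iff_ne_empty.mpr hne
  set U' : Finset (Pt v) := T.filter (fun P => P.rep ∈ U) with hU'
  have himg : U'.image Projectivization.rep = U := by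
    apply Finset.Subset.antisymm
    · intro x hx
      rw [Finset.mem_image] at hx
      obtain ⟨P, hP, rfl⟩ := hx
      exact (Finset.mem_filter.mp hP).2
    · intro x hx
      have hx2 := hU hx
      rw [Finset.mem_image] at hx2 ⊢
      obtain ⟨P, hP, rfl⟩ := hx2
      exact ⟨P, Finset.mem_filter.mpr ⟨hP, hx⟩, rfl⟩
  have hsum' : ∑ P ∈ U', P.rep = 0 := by
    rw [← hUsum, ← himg, Finset.sum_image (fun x _ y _ hxy => rep_inj hxy)]
  have hne' : U'.Nonempty := by
    rcases hUne with ⟨x, hx⟩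
    rw [← himg, Finset.mem_image] at hx
    obtain ⟨P, hP, _⟩ := hx
    exact ⟨P, hP⟩
  have hcard' : U'.card ≤ 4 := le_trans (Finset.card_le_card (Finset.filter_subset _ _)) hT4
  by_cases hle : U'.card ≤ 2
  · exact no_small_zero_sum U' hne' hle hsum'
  · have hsubS : U' ⊆ S0 := le_trans (Finset.filter_subset _ _) hT
    have hcsd : (S0 \ U').card = 5 - U'.card := by rw [Finset.card_sdiff_of_subset hsubS, h5]
    have hWsum : ∑ P ∈ S0 \ U', P.rep = 0 := by
      have := Finset.sum_sdiff (f := fun P : Pt v => P.rep) hsubS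
      rw [hsum', add_zero, hsum] at this
      exact this
    have hWne : (S0 \ U').Nonempty := Finset.card_pos.mp (by omega)
    exact no_small_zero_sum _ hWne (by omega) hWsum

lemma supr_eq_span (T : Finset (Pt v)) :
    (⨆ P ∈ T, Projectivization.submodule P) =
      Submodule.span (ZMod 2) ((T.image Projectivization.rep : Finset (V2 v)) : Set (V2 v)) := by
  apply le_antisymm
  · refine iSup₂_le fun P hP => ?_
    rw [Projectivization.submodule_eq]
    apply Submodule.span_mono
    intro x hx
    rw [Set.mem_singleton_iff] at hx
    subst hx
    simp only [Finset.coe_image, Set.mem_image, Finset.mem_coe]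
    exact ⟨P, hP, rfl⟩
  · rw [Submodule.span_le]
    intro x hx
    simp only [Finset.coe_image, Set.mem_image, Finset.mem_coe] at hx
    obtain ⟨P, hP, rfl⟩ := hx
    have h1 : Projectivization.submodule P ≤ ⨆ P ∈ T, Projectivization.submodule P :=
      le_iSup₂ (f := fun (P : Pt v) (_ : P ∈ T) => Projectivization.submodule P) P hP
    exact h1 (by rw [Projectivization.submodule_eq]; exact Submodule.mem_span_singleton_self _)

end Stmt5Aux

open Stmt5Aux Projectivization Submodule Module in
theorem stmt_5 (v : ℕ) (M : Projectivization (ZMod 2) (Fin v → ZMod 2) → ℕ)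
    (hdiv : IsDivisible 2 M) (hcard : MVal M ⊤ = 5) :
    (∃ (L : Submodule (ZMod 2) (Fin v → ZMod 2))
        (P : Projectivization (ZMod 2) (Fin v → ZMod 2)),
      Module.finrank (ZMod 2) L = 2 ∧
      ∀ Q, M Q = (if Q.submodule ≤ L then 1 else 0) + (if Q = P then 2 else 0)) ∨
    (∃ B : Finset (Projectivization (ZMod 2) (Fin v → ZMod 2)), IsProjBase 5 B ∧
      ∀ Q, M Q = if Q ∈ B then 1 else 0) := by
  set S0 : Finset (Pt v) := Finset.univ.filter (fun P : Pt v => M P % 2 = 1) with hS0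
  have hsum0 : ∑ P ∈ S0, P.rep = 0 := key2 M hdiv hcard
  have htot : ∑ P, M P = 5 := by rw [← mval_top M]; exact hcard
  have hodd1 : ∀ Q ∈ S0, 1 ≤ M Q := by
    intro Q hQ
    rw [hS0, Finset.mem_filter] at hQ
    omega
  have hcard_parity : S0.card % 2 = 1 := by
    have h1 : (∑ P, M P) % 2 = (∑ P, M P % 2) % 2 := Finset.sum_nat_mod _ _ _
    have h2 : ∑ P, M P % 2 = S0.card := by
      rw [hS0, Finset.card_filter]
      refine Finset.sum_congr rfl fun P _ => ?_
      rcases Nat.mod_two_eq_zero_or_one (M P) with h | h <;> simp [h]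
    omega
  have hcard_le : S0.card ≤ 5 := by
    calc S0.card = ∑ P ∈ S0, 1 := (Finset.card_eq_sum_ones _)
    _ ≤ ∑ P ∈ S0, M P := Finset.sum_le_sum hodd1
    _ ≤ ∑ P, M P := Finset.sum_le_sum_of_subset (Finset.subset_univ _)
    _ = 5 := htot
  rcases (by omega : S0.card = 1 ∨ S0.card = 3 ∨ S0.card = 5) with h1 | h3 | h5
  · -- impossible
    obtain ⟨a, ha⟩ := Finset.card_eq_one.mp h1
    rw [ha, Finset.sum_singleton] at hsum0
    exact absurd hsum0 a.rep_nonzero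
  · -- line plus double point
    left
    obtain ⟨a, b, c, hab, hac, hbc, habc⟩ := Finset.card_eq_three.mp h3
    rw [habc] at hsum0
    rw [Finset.sum_insert (by simp [hab, hac]), Finset.sum_insert (by simp [hbc]),
      Finset.sum_singleton] at hsum0
    have hc : a.rep + b.rep = c.rep := by
      have h := addself c.rep
      have h2 : (a.rep + (b.rep + c.rep)) + c.rep = 0 + c.rep := by rw [hsum0]
      rwa [zero_add, add_assoc, add_assoc, h, add_zero] at h2
    have hrab : a.rep ≠ b.rep := fun h => hab (rep_inj h)
    set L : Submodule (ZMod 2) (V2 v) :=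
      Submodule.span (ZMod 2) (({a.rep, b.rep} : Finset (V2 v)) : Set (V2 v)) with hL
    have indep : LinearIndependent (ZMod 2) ((↑) : ({a.rep, b.rep} : Finset (V2 v)) → V2 v) := by
      apply indep_of_no_zero_sum
      intro U hU hUs
      have hmem : ∀ x ∈ U, x = a.rep ∨ x = b.rep := fun x hx => by
        have := hU hx; simpa using this
      by_cases ha' : a.rep ∈ U <;> by_cases hb' : b.rep ∈ U
      · exfalso
        have hUeq : U = {a.rep, b.rep} := by
          apply Finset.Subset.antisymm hU
          intro x hx
          simp only [Finset.mem_insert, Finset.mem_singleton] at hx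
          rcases hx with rfl | rfl <;> assumption
        rw [hUeq, Finset.sum_pair hrab] at hUs
        exact pair_sum_ne a.rep_nonzero hrab hUs
      · exfalso
        have hUeq : U = {a.rep} := by
          apply Finset.Subset.antisymm
          · intro x hx
            rcases hmem x hx with rfl | rfl
            · simp
            · exact absurd hx hb'
          · simpa using ha'
        rw [hUeq, Finset.sum_singleton] at hUs
        exact a.rep_nonzero hUs
      · exfalso
        have hUeq : U = {b.rep} := by
          apply Finset.Subset.antisymm
          · intro x hx
            rcases hmem x hx with rfl | rfl
            · exact absurd hx ha'
            · simp
          · simpa using hb'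
        rw [hUeq, Finset.sum_singleton] at hUs
        exact b.rep_nonzero hUs
      · apply Finset.eq_empty_of_forall_notMem
        intro x hx
        rcases hmem x hx with rfl | rfl
        · exact ha' hx
        · exact hb' hx
    have hfr : finrank (ZMod 2) L = 2 := by
      rw [hL, finrank_span_finset_eq_card indep, Finset.card_pair hrab]
    have hptL : ∀ Q : Pt v, Q.submodule ≤ L ↔ Q ∈ S0 := by
      intro Q
      rw [habc]
      rw [Projectivization.submodule_eq, Submodule.span_singleton_le_iff_mem]
      have hLset : (({a.rep, b.rep} : Finset (V2 v)) : Set (V2 v)) = {a.rep, b.rep} := by simp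
      constructor
      · intro hQ
        rw [hL, hLset, Submodule.mem_span_pair] at hQ
        obtain ⟨s, t, hst⟩ := hQ
        simp only [Finset.mem_insert, Finset.mem_singleton]
        rcases zmod2_cases s with rfl | rfl <;> rcases zmod2_cases t with rfl | rfl <;>
          simp only [zero_smul, one_smul, zero_add, add_zero] at hst
        · exact absurd hst.symm Q.rep_nonzero
        · exact Or.inr (Or.inl (rep_inj hst.symm))
        · exact Or.inl (rep_inj hst.symm)
        · exact Or.inr (Or.inr (rep_inj (hc.symm.trans hst).symm))
      · intro hQ
        simp only [Finset.mem_insert, Finset.mem_singleton] at hQ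
        rcases hQ with rfl | rfl | rfl
        · exact Submodule.subset_span (by rw [hLset]; simp)
        · exact Submodule.subset_span (by rw [hLset]; simp)
        · rw [← hc]
          exact add_mem (Submodule.subset_span (by rw [hLset]; simp))
            (Submodule.subset_span (by rw [hLset]; simp))
    set N : Pt v → ℕ := fun Q => M Q - (if Q ∈ S0 then 1 else 0) with hN
    have hNsum : ∑ Q, N Q = 2 := by
      have h1 : ∑ Q, N Q = (∑ Q, M Q) - ∑ Q : Pt v, (if Q ∈ S0 then 1 else 0) := by
        rw [hN]
        refine Finset.sum_tsub_distrib _ (fun Q _ => ?_)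
        by_cases h : Q ∈ S0
        · simpa [h] using hodd1 Q h
        · simp [h]
      have h2 : ∑ Q : Pt v, (if Q ∈ S0 then 1 else 0) = 3 := by
        rw [Finset.sum_ite_mem, Finset.univ_inter, Finset.sum_const, h3, smul_eq_mul]
      omega
    have hP : ∃ P : Pt v, N P = 2 ∧ ∀ Q, Q ≠ P → N Q = 0 := by
      have hex : ∃ P, N P ≠ 0 := by
        by_contra hcon
        push_neg at hcon
        have : ∑ Q, N Q = 0 := Finset.sum_eq_zero fun Q _ => hcon Q
        omega
      obtain ⟨P, hP0⟩ := hex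
      have hPev : N P % 2 = 0 := by
        have hNval : N P = M P - (if P ∈ S0 then 1 else 0) := rfl
        by_cases h : P ∈ S0
        · have hg1 := hodd1 P h
          have hg2 : M P % 2 = 1 := by
            rw [hS0, Finset.mem_filter] at h
            exact h.2
          rw [hNval, if_pos h]
          omega
        · have hg2 : M P % 2 = 0 := by
            rw [hS0, Finset.mem_filter] at h
            simp only [Finset.mem_univ, true_and] at h
            omega
          rw [hNval, if_neg h]
          omega
      have hP2 : 2 ≤ N P := by omega
      have hPle : N P ≤ ∑ Q, N Q :=
        Finset.single_le_sum (fun _ _ => Nat.zero_le _) (Finset.mem_univ P)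
      refine ⟨P, by omega, fun Q hQ => ?_⟩
      have hQle : N P + N Q ≤ ∑ R, N R := by
        rw [← Finset.sum_pair (Ne.symm hQ)]
        exact Finset.sum_le_sum_of_subset (Finset.subset_univ _)
      omega
    obtain ⟨P, hPP, hPQ⟩ := hP
    refine ⟨L, P, hfr, fun Q => ?_⟩
    have e1 : (if Q.submodule ≤ L then (1:ℕ) else 0) = (if Q ∈ S0 then 1 else 0) := by
      by_cases h : Q ∈ S0
      · rw [if_pos ((hptL Q).mpr h), if_pos h]
      · rw [if_neg (fun hh => h ((hptL Q).mp hh)), if_neg h]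
    have e2 : (if Q = P then (2:ℕ) else 0) = N Q := by
      by_cases h : Q = P
      · rw [if_pos h, h, hPP]
      · rw [if_neg h, hPQ Q h]
    rw [e1, e2]
    show M Q = (if Q ∈ S0 then 1 else 0) + (M Q - (if Q ∈ S0 then 1 else 0))
    by_cases h : Q ∈ S0
    · have := hodd1 Q h
      simp only [if_pos h]
      omega
    · simp only [if_neg h]
      omega
  · -- projective base
    right
    have hall : ∀ Q, M Q = if Q ∈ S0 then 1 else 0 := by
      have hsplit : ∑ Q ∈ S0, M Q + ∑ Q ∈ S0ᶜ, M Q = 5 := by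
        rw [Finset.sum_add_sum_compl]; exact htot
      have hge : 5 ≤ ∑ Q ∈ S0, M Q := by
        calc (5:ℕ) = S0.card := h5.symm
        _ = ∑ Q ∈ S0, 1 := Finset.card_eq_sum_ones _
        _ ≤ ∑ Q ∈ S0, M Q := Finset.sum_le_sum hodd1
      have hle : ∑ Q ∈ S0, M Q ≤ 5 := by omega
      have hsum5 : ∑ Q ∈ S0, M Q = 5 := le_antisymm hle hge
      intro Q
      by_cases h : Q ∈ S0
      · have h4 : 4 ≤ ∑ R ∈ S0.erase Q, M R := by
          calc (4:ℕ) = (S0.erase Q).card := by rw [Finset.card_erase_of_mem h, h5]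
          _ = ∑ R ∈ S0.erase Q, 1 := Finset.card_eq_sum_ones _
          _ ≤ ∑ R ∈ S0.erase Q, M R :=
            Finset.sum_le_sum fun R hR => hodd1 R (Finset.mem_of_mem_erase hR)
        have h5' : M Q + ∑ R ∈ S0.erase Q, M R = 5 := by
          rw [Finset.add_sum_erase _ _ h, hsum5]
        have := hodd1 Q h
        rw [if_pos h]
        omega
      · have h0 : ∑ R ∈ S0ᶜ, M R = 0 := by omega
        rw [if_neg h]
        exact Finset.sum_eq_zero_iff.mp h0 Q (Finset.mem_compl.mpr h)
    refine ⟨S0, ⟨h5, fun T hT hT4 => ?_⟩, hall⟩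
    have hT4' : T.card = 4 := by omega
    rw [supr_eq_span T, finrank_span_finset_eq_card (indep5 S0 h5 hsum0 T hT (by omega)),
      Finset.card_image_of_injective _ rep_inj, hT4']
end

section
/- Let M be a 2-divisible multiset of points in PG(v-1,2) of cardinality 6 with maximum point multiplicity 1 (i.e., M is a set of 6 points). Then either M is a projective base of size 6, or M = χ_{L_1} + χ_{L_2} for two disjoint lines L_1, L_2. -/
open scoped Classical

namespace Stmt6Aux
variable {v : ℕ}

noncomputable instance : Fintype (Projectivization (ZMod 2) (Fin v → ZMod 2)) := by
  have : Finite (Projectivization (ZMod 2) (Fin v → ZMod 2)) :=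
    Quotient.finite (projectivizationSetoid _ _)
  exact Fintype.ofFinite _

lemma zmodCases : ∀ a : ZMod 2, a = 0 ∨ a = 1 := by decide

lemma addSelf (x : Fin v → ZMod 2) : x + x = 0 := by
  have h : (1 : ZMod 2) + 1 = 0 := by decide
  calc x + x = ((1:ZMod 2)+1) • x := by rw [add_smul, one_smul]
  _ = 0 := by rw [h, zero_smul]

lemma rep_inj : Function.Injective
    (Projectivization.rep : Projectivization (ZMod 2) (Fin v → ZMod 2) → (Fin v → ZMod 2)) := by
  intro P Q h
  conv_lhs => rw [← P.mk_rep]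
  conv_rhs => rw [← Q.mk_rep]
  exact (Projectivization.mk_eq_mk_iff _ _ _ _ _).mpr ⟨1, by simp [h]⟩

lemma finrank_span_of_no_zsum (t : Finset (Fin v → ZMod 2))
    (h : ∀ u ⊆ t, ∑ x ∈ u, x = 0 → u = ∅) :
    Module.finrank (ZMod 2) (Submodule.span (ZMod 2) (t : Set (Fin v → ZMod 2))) = t.card := by
  classical
  apply finrank_span_finset_eq_card
  show LinearIndependent (ZMod 2) (fun x : (t : Set (Fin v → ZMod 2)) => (x : Fin v → ZMod 2))
  rw [linearIndependent_iff']
  intro s g hg i hi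
  by_contra hgi
  set u : Finset (Fin v → ZMod 2) := (s.filter fun j => g j ≠ 0).image Subtype.val with hu
  have hut : u ⊆ t := by
    intro x hx
    rw [hu, Finset.mem_image] at hx
    obtain ⟨j, _, rfl⟩ := hx
    exact j.2
  have hsum : ∑ x ∈ u, x = 0 := by
    rw [hu, Finset.sum_image (fun a _ b _ hab => Subtype.val_injective hab)]
    rw [← hg, Finset.sum_filter]
    apply Finset.sum_congr rfl
    intro j _
    rcases zmodCases (g j) with h' | h' <;> simp [h']
  have hemp := h u hut hsum
  have hiu : (i : Fin v → ZMod 2) ∈ u :=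
    Finset.mem_image_of_mem _ (Finset.mem_filter.mpr ⟨hi, hgi⟩)
  rw [hemp] at hiu
  exact absurd hiu (Finset.notMem_empty _)

lemma no_zsum1 (w : Finset (Projectivization (ZMod 2) (Fin v → ZMod 2)))
    (h1 : w.card = 1) (hz : ∑ P ∈ w, P.rep = 0) : False := by
  obtain ⟨a, rfl⟩ := Finset.card_eq_one.mp h1
  rw [Finset.sum_singleton] at hz
  exact a.rep_nonzero hz

lemma no_zsum2 (w : Finset (Projectivization (ZMod 2) (Fin v → ZMod 2)))
    (h2 : w.card = 2) (hz : ∑ P ∈ w, P.rep = 0) : False := by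
  obtain ⟨a, b, hab, rfl⟩ := Finset.card_eq_two.mp h2
  rw [Finset.sum_pair hab] at hz
  refine hab (rep_inj ?_)
  calc a.rep = a.rep + b.rep + b.rep := by rw [add_assoc, addSelf, add_zero]
  _ = b.rep := by rw [hz, zero_add]

lemma pair_no_zsum (x y : Fin v → ZMod 2) (hx : x ≠ 0) (hy : y ≠ 0) (hxy : x + y ≠ 0) :
    ∀ u ⊆ ({x, y} : Finset (Fin v → ZMod 2)), ∑ z ∈ u, z = 0 → u = ∅ := by
  intro u hu hz
  have hne : x ≠ y := by
    rintro rfl; exact hxy (addSelf x)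
  have hc2 : ({x, y} : Finset (Fin v → ZMod 2)).card = 2 := Finset.card_pair hne
  by_contra hne'
  have hpos : 1 ≤ u.card := Finset.card_pos.mpr (Finset.nonempty_of_ne_empty hne')
  have hle : u.card ≤ 2 := by
    calc u.card ≤ ({x, y} : Finset (Fin v → ZMod 2)).card := Finset.card_le_card hu
    _ = 2 := hc2
  rcases (by omega : u.card = 1 ∨ u.card = 2) with h | h
  · obtain ⟨z, rfl⟩ := Finset.card_eq_one.mp h
    rw [Finset.sum_singleton] at hz
    have := hu (Finset.mem_singleton_self z)
    rw [Finset.mem_insert, Finset.mem_singleton] at this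
    rcases this with rfl | rfl
    · exact hx hz
    · exact hy hz
  · have : u = {x, y} := Finset.eq_of_subset_of_card_le hu (by omega)
    subst this
    rw [Finset.sum_pair hne] at hz
    exact hxy hz

lemma no_small_zsum (S : Finset (Projectivization (ZMod 2) (Fin v → ZMod 2)))
    (hS6 : S.card = 6) (hsum : ∑ P ∈ S, P.rep = 0)
    (hno3 : ¬ ∃ a ∈ S, ∃ b ∈ S, ∃ c ∈ S, a ≠ b ∧ a ≠ c ∧ b ≠ c ∧ a.rep + b.rep + c.rep = 0)
    (u : Finset (Projectivization (ZMod 2) (Fin v → ZMod 2))) (hu : u ⊆ S)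
    (hcard : u.card ≤ 5) (hz : ∑ P ∈ u, P.rep = 0) : u = ∅ := by
  classical
  by_contra hne
  have hpos : 1 ≤ u.card := Finset.card_pos.mpr (Finset.nonempty_of_ne_empty hne)
  have hcomp : ∑ P ∈ S \ u, P.rep = 0 := by
    have h := Finset.sum_sdiff (f := Projectivization.rep) hu
    rw [hsum] at h
    calc ∑ P ∈ S \ u, P.rep
        = ∑ P ∈ S \ u, P.rep + ∑ P ∈ u, P.rep := by rw [hz, add_zero]
    _ = 0 := h
  have hcompcard : (S \ u).card = 6 - u.card := by rw [Finset.card_sdiff_of_subset hu, hS6]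
  rcases (by omega : u.card = 1 ∨ u.card = 2 ∨ u.card = 3 ∨ u.card = 4 ∨ u.card = 5)
    with h | h | h | h | h
  · exact no_zsum1 u h hz
  · exact no_zsum2 u h hz
  · obtain ⟨a, b, c, hab, hac, hbc, rfl⟩ := Finset.card_eq_three.mp h
    refine hno3 ⟨a, hu (by simp), b, hu (by simp), c, hu (by simp), hab, hac, hbc, ?_⟩
    rw [Finset.sum_insert (by simp [hab, hac]), Finset.sum_insert (by simp [hbc]),
      Finset.sum_singleton, ← add_assoc] at hz
    exact hz
  · exact no_zsum2 _ (by omega : (S \ u).card = 2) hcomp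
  · exact no_zsum1 _ (by omega : (S \ u).card = 1) hcomp

end Stmt6Aux

open Stmt6Aux

theorem stmt_6 (v : ℕ) (M : Projectivization (ZMod 2) (Fin v → ZMod 2) → ℕ)
    (hdiv : IsDivisible 2 M) (hcard : MVal M ⊤ = 6) (hγ : ∀ P, M P ≤ 1) :
    (∃ B : Finset (Projectivization (ZMod 2) (Fin v → ZMod 2)), IsProjBase 6 B ∧
      ∀ Q, M Q = if Q ∈ B then 1 else 0) ∨
    (∃ L₁ L₂ : Submodule (ZMod 2) (Fin v → ZMod 2),
      Module.finrank (ZMod 2) L₁ = 2 ∧ Module.finrank (ZMod 2) L₂ = 2 ∧ L₁ ⊓ L₂ = ⊥ ∧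
      ∀ Q, M Q = (if Q.submodule ≤ L₁ then 1 else 0) + (if Q.submodule ≤ L₂ then 1 else 0)) := by
  classical
  set S : Finset (Projectivization (ZMod 2) (Fin v → ZMod 2)) :=
    Finset.univ.filter (fun P => M P = 1) with hS
  have hMS : ∀ P, M P = if P ∈ S then 1 else 0 := by
    intro P
    rcases Nat.le_one_iff_eq_zero_or_eq_one.mp (hγ P) with h' | h' <;> simp [hS, h']
  have hMVal : ∀ K : Submodule (ZMod 2) (Fin v → ZMod 2),
      MVal M K = (S.filter (fun P => P.submodule ≤ K)).card := by
    intro K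
    have hset : {P : Projectivization (ZMod 2) (Fin v → ZMod 2) | P.submodule ≤ K}
        = ↑(Finset.univ.filter (fun P : Projectivization (ZMod 2) (Fin v → ZMod 2) =>
            P.submodule ≤ K)) := by
      ext P; simp
    rw [MVal, hset, finsum_mem_coe_finset,
      Finset.sum_congr rfl (fun P _ => hMS P), Finset.sum_ite_mem, Finset.sum_const,
      smul_eq_mul, mul_one]
    congr 1
    ext P
    simp [hS, and_comm]
  have hS6 : S.card = 6 := by
    have h := hMVal ⊤
    rw [hcard, Finset.filter_true_of_mem (fun P _ => le_top)] at h
    omega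
  have hsum : ∑ P ∈ S, P.rep = 0 := by
    funext i
    rw [Finset.sum_apply]
    show _ = (0 : ZMod 2)
    set f : (Fin v → ZMod 2) →ₗ[ZMod 2] ZMod 2 := LinearMap.proj i with hf
    have hfsurj : Function.Surjective f := by
      intro c
      exact ⟨Pi.single i c, by simp [hf]⟩
    have hrange : Module.finrank (ZMod 2) (LinearMap.range f) = 1 := by
      rw [LinearMap.range_eq_top.mpr hfsurj, finrank_top, Module.finrank_self]
    have hker : Module.finrank (ZMod 2) (LinearMap.ker f) + 1
        = Module.finrank (ZMod 2) (Fin v → ZMod 2) := by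
      have h := f.finrank_range_add_finrank_ker
      omega
    have hmod := hdiv (LinearMap.ker f) hker
    rw [hMVal, hcard] at hmod
    have hmem : ∀ P : Projectivization (ZMod 2) (Fin v → ZMod 2),
        P.submodule ≤ LinearMap.ker f ↔ P.rep i = 0 := by
      intro P
      rw [Projectivization.submodule_eq, Submodule.span_singleton_le_iff_mem,
        LinearMap.mem_ker]
      simp [hf]
    have hsplit := Finset.card_filter_add_card_filter_not
      (s := S) (p := fun P => P.rep i = 0)
    have hc0 : (S.filter (fun P => P.submodule ≤ LinearMap.ker f)).card
        = (S.filter (fun P => P.rep i = 0)).card := by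
      congr 1
      ext P
      simp [Finset.mem_filter, hmem]
    rw [hc0] at hmod
    rw [hS6] at hsplit
    have heven : ∃ k, (S.filter (fun P => ¬ P.rep i = 0)).card = 2 * k := by
      simp [Nat.ModEq] at hmod
      exact ⟨(S.filter (fun P => ¬ P.rep i = 0)).card / 2, by omega⟩
    obtain ⟨k, hk⟩ := heven
    rw [← Finset.sum_filter_ne_zero]
    have hone : ∀ P ∈ S.filter (fun P => ¬ P.rep i = 0), P.rep i = 1 := by
      intro P hP
      rcases zmodCases (P.rep i) with h' | h'
      · exact absurd h' (Finset.mem_filter.mp hP).2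
      · exact h'
    rw [Finset.sum_congr rfl hone, Finset.sum_const, hk, nsmul_eq_mul, mul_one]
    push_cast
    rw [show ((2:ZMod 2)) = 0 by decide, zero_mul]

  by_cases hline : ∃ a ∈ S, ∃ b ∈ S, ∃ c ∈ S,
      a ≠ b ∧ a ≠ c ∧ b ≠ c ∧ a.rep + b.rep + c.rep = 0
  · obtain ⟨a, ha, b, hb, c, hc, hab, hac, hbc, habc⟩ := hline
    have hrc : a.rep + b.rep = c.rep := by
      calc a.rep + b.rep = a.rep + b.rep + (c.rep + c.rep) := by rw [addSelf, add_zero]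
      _ = (a.rep + b.rep + c.rep) + c.rep := (add_assoc _ _ _).symm
      _ = c.rep := by rw [habc, zero_add]
    set abc : Finset (Projectivization (ZMod 2) (Fin v → ZMod 2)) := {a, b, c} with habcdef
    have habcS : abc ⊆ S :=
      Finset.insert_subset ha (Finset.insert_subset hb (Finset.singleton_subset_iff.mpr hc))
    have habccard : abc.card = 3 := by
      rw [habcdef, Finset.card_insert_of_notMem (by simp [hab, hac]),
        Finset.card_insert_of_notMem (by simp [hbc]), Finset.card_singleton]
    have habcsum : ∑ P ∈ abc, P.rep = 0 := by
      rw [habcdef, Finset.sum_insert (by simp [hab, hac]), Finset.sum_insert (by simp [hbc]),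
        Finset.sum_singleton, ← add_assoc, habc]
    have hrestsum : ∑ P ∈ S \ abc, P.rep = 0 := by
      have h := Finset.sum_sdiff (f := Projectivization.rep) habcS
      rw [hsum, habcsum, add_zero] at h
      exact h
    have hrestcard : (S \ abc).card = 3 := by
      rw [Finset.card_sdiff_of_subset habcS, hS6, habccard]
    obtain ⟨d, e, f, hde, hdf, hef, hrest⟩ := Finset.card_eq_three.mp hrestcard
    have hd : d ∈ S \ abc := by rw [hrest]; simp
    have he : e ∈ S \ abc := by rw [hrest]; simp
    have hf : f ∈ S \ abc := by rw [hrest]; simp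
    rw [hrest, Finset.sum_insert (by simp [hde, hdf]), Finset.sum_insert (by simp [hef]),
      Finset.sum_singleton, ← add_assoc] at hrestsum
    have hrf : d.rep + e.rep = f.rep := by
      calc d.rep + e.rep = (d.rep + e.rep + f.rep) + f.rep := by
            rw [add_assoc, addSelf, add_zero]
      _ = f.rep := by rw [hrestsum, zero_add]
    have hdne : d ≠ a ∧ d ≠ b ∧ d ≠ c := by
      have h := (Finset.mem_sdiff.mp hd).2
      simpa [habcdef] using h
    have hene : e ≠ a ∧ e ≠ b ∧ e ≠ c := by
      have h := (Finset.mem_sdiff.mp he).2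
      simpa [habcdef] using h
    have hfne : f ≠ a ∧ f ≠ b ∧ f ≠ c := by
      have h := (Finset.mem_sdiff.mp hf).2
      simpa [habcdef] using h
    have hmemL : ∀ (x y z : Projectivization (ZMod 2) (Fin v → ZMod 2)),
        x.rep + y.rep = z.rep →
        ∀ Q : Projectivization (ZMod 2) (Fin v → ZMod 2),
        Q.submodule ≤ Submodule.span (ZMod 2) {x.rep, y.rep} ↔ (Q = x ∨ Q = y ∨ Q = z) := by
      intro x y z hxyz Q
      rw [Projectivization.submodule_eq, Submodule.span_singleton_le_iff_mem]
      constructor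
      · intro h
        rw [Submodule.mem_span_pair] at h
        obtain ⟨s', t', hst⟩ := h
        rcases zmodCases s' with rfl | rfl <;> rcases zmodCases t' with rfl | rfl <;>
          simp only [zero_smul, one_smul, add_zero, zero_add] at hst
        · exact absurd hst.symm Q.rep_nonzero
        · exact Or.inr (Or.inl (rep_inj hst).symm)
        · exact Or.inl (rep_inj hst).symm
        · exact Or.inr (Or.inr (rep_inj (hxyz.symm.trans hst)).symm)
      · rintro (rfl | rfl | rfl)
        · exact Submodule.subset_span (by simp)
        · exact Submodule.subset_span (by simp)
        · rw [← hxyz]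
          exact Submodule.add_mem _ (Submodule.subset_span (by simp))
            (Submodule.subset_span (by simp))
    refine Or.inr ⟨Submodule.span (ZMod 2) {a.rep, b.rep},
      Submodule.span (ZMod 2) {d.rep, e.rep}, ?_, ?_, ?_, ?_⟩
    · have h := finrank_span_of_no_zsum ({a.rep, b.rep} : Finset (Fin v → ZMod 2))
        (pair_no_zsum _ _ a.rep_nonzero b.rep_nonzero (by rw [hrc]; exact c.rep_nonzero))
      rw [Finset.coe_insert, Finset.coe_singleton] at h
      rw [h, Finset.card_pair (fun h' => hab (rep_inj h'))]
    · have h := finrank_span_of_no_zsum ({d.rep, e.rep} : Finset (Fin v → ZMod 2))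
        (pair_no_zsum _ _ d.rep_nonzero e.rep_nonzero (by rw [hrf]; exact f.rep_nonzero))
      rw [Finset.coe_insert, Finset.coe_singleton] at h
      rw [h, Finset.card_pair (fun h' => hde (rep_inj h'))]
    · rw [eq_bot_iff]
      intro x hx
      rw [Submodule.mem_inf] at hx
      rw [Submodule.mem_bot]
      by_contra hx0
      obtain ⟨P, hP⟩ : ∃ P : Projectivization (ZMod 2) (Fin v → ZMod 2),
          P.submodule = Submodule.span (ZMod 2) {x} :=
        ⟨Projectivization.mk (ZMod 2) x hx0, Projectivization.submodule_mk x hx0⟩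
      have h1 : P = a ∨ P = b ∨ P = c := (hmemL a b c hrc P).mp (by
        rw [hP]
        exact (Submodule.span_singleton_le_iff_mem x _).mpr hx.1)
      have h2 : P = d ∨ P = e ∨ P = f := (hmemL d e f hrf P).mp (by
        rw [hP]
        exact (Submodule.span_singleton_le_iff_mem x _).mpr hx.2)
      rcases h1 with rfl | rfl | rfl <;> rcases h2 with h2 | h2 | h2 <;>
        first
        | exact hdne.1 h2.symm
        | exact hdne.2.1 h2.symm
        | exact hdne.2.2 h2.symm
        | exact hene.1 h2.symm
        | exact hene.2.1 h2.symm
        | exact hene.2.2 h2.symm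
        | exact hfne.1 h2.symm
        | exact hfne.2.1 h2.symm
        | exact hfne.2.2 h2.symm
    · intro Q
      rw [hMS Q]
      have hQ1 := hmemL a b c hrc Q
      have hQ2 := hmemL d e f hrf Q
      have hQS : Q ∈ S ↔ ((Q = a ∨ Q = b ∨ Q = c) ∨ (Q = d ∨ Q = e ∨ Q = f)) := by
        constructor
        · intro h
          by_cases h' : Q ∈ abc
          · left; simpa [habcdef] using h'
          · right
            have hQr : Q ∈ S \ abc := Finset.mem_sdiff.mpr ⟨h, h'⟩
            rw [hrest] at hQr
            simpa using hQr
        · rintro ((rfl | rfl | rfl) | (rfl | rfl | rfl))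
          · exact ha
          · exact hb
          · exact hc
          · exact (Finset.mem_sdiff.mp hd).1
          · exact (Finset.mem_sdiff.mp he).1
          · exact (Finset.mem_sdiff.mp hf).1
      rw [if_congr hQS rfl rfl, if_congr hQ1 rfl rfl, if_congr hQ2 rfl rfl]
      by_cases hA : Q = a ∨ Q = b ∨ Q = c <;> by_cases hB : Q = d ∨ Q = e ∨ Q = f
      · exfalso
        rcases hA with rfl | rfl | rfl <;> rcases hB with h2 | h2 | h2 <;>
          first
          | exact hdne.1 h2.symm
          | exact hdne.2.1 h2.symm
          | exact hdne.2.2 h2.symm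
          | exact hene.1 h2.symm
          | exact hene.2.1 h2.symm
          | exact hene.2.2 h2.symm
          | exact hfne.1 h2.symm
          | exact hfne.2.1 h2.symm
          | exact hfne.2.2 h2.symm
      · simp [hA, hB]
      · simp [hA, hB]
      · simp [hA, hB]
  · -- projective base case
    refine Or.inl ⟨S, ⟨hS6, ?_⟩, hMS⟩
    intro T hT hTcard
    have hT5 : T.card = 5 := by omega
    have hsupeq : (⨆ P ∈ T, Projectivization.submodule P)
        = Submodule.span (ZMod 2)
          ((T.image Projectivization.rep : Finset (Fin v → ZMod 2)) : Set (Fin v → ZMod 2)) := by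
      rw [Submodule.span_eq_iSup_of_singleton_spans, Finset.coe_image]
      simp only [iSup_image, Finset.mem_coe, Projectivization.submodule_eq]
    rw [hsupeq]
    have hzsum : ∀ u ⊆ T.image Projectivization.rep, ∑ x ∈ u, x = 0 → u = ∅ := by
      intro u hu hz
      set u' := T.filter (fun P => P.rep ∈ u) with hu'
      have himg : u'.image Projectivization.rep = u := by
        ext x
        constructor
        · intro hx
          rw [Finset.mem_image] at hx
          obtain ⟨P, hP, rfl⟩ := hx
          exact (Finset.mem_filter.mp hP).2
        · intro hx
          have hxT := hu hx
          rw [Finset.mem_image] at hxT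
          obtain ⟨P, hP, rfl⟩ := hxT
          exact Finset.mem_image_of_mem _ (Finset.mem_filter.mpr ⟨hP, hx⟩)
      have hsum' : ∑ P ∈ u', P.rep = 0 := by
        have h := Finset.sum_image (s := u') (g := Projectivization.rep)
          (f := fun x : Fin v → ZMod 2 => x) (fun x _ y _ h' => rep_inj h')
        rw [himg] at h
        rw [← h]
        exact hz
      have hu'S : u' ⊆ S := (Finset.filter_subset _ _).trans hT
      have hu'5 : u'.card ≤ 5 := hT5 ▸ Finset.card_le_card (Finset.filter_subset _ _)
      have hu'emp : u' = ∅ := no_small_zsum S hS6 hsum hline u' hu'S hu'5 hsum'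
      rw [← himg, hu'emp, Finset.image_empty]
    have hcard5 : (T.image Projectivization.rep).card = 5 := by
      rw [Finset.card_image_of_injective _ rep_inj, hT5]
    rw [finrank_span_of_no_zsum _ hzsum, hcard5]
end

section
/- Let M be a 4-divisible multiset of points in PG(v-1,2) of cardinality 12 with maximum point multiplicity at most 3. Then every point has even multiplicity, i.e., (1/2)·M is a 2-divisible multiset of cardinality 6. -/
set_option maxHeartbeats 1000000

open scoped Classical

open Finset

namespace S9

abbrev Vec (v : ℕ) := Fin v → ZMod 2
abbrev Dl (v : ℕ) := Module.Dual (ZMod 2) (Vec v)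

noncomputable instance (v : ℕ) : Fintype (Dl v) := by
  have : Finite (Dl v) :=
    Finite.of_injective _ (DFunLike.coe_injective (F := Dl v))
  exact Fintype.ofFinite _

variable {v : ℕ}

lemma zmod2_cases (a : ZMod 2) : a = 0 ∨ a = 1 := by
  revert a; decide

lemma exists_dual (W : Submodule (ZMod 2) (Vec v)) (x : Vec v) (hx : x ∉ W) :
    ∃ u : Dl v, u x = 1 ∧ ∀ y ∈ W, u y = 0 := by
  have hq : W.mkQ x ≠ 0 := by
    simpa [Submodule.mkQ_apply, Submodule.Quotient.mk_eq_zero] using hx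
  have h2 : ¬ (∀ φ : Module.Dual (ZMod 2) ((Fin v → ZMod 2) ⧸ W), φ (W.mkQ x) = 0) := by
    rw [Module.forall_dual_apply_eq_zero_iff]; exact hq
  push_neg at h2
  obtain ⟨φ, hφ⟩ := h2
  have h1 : φ (W.mkQ x) = 1 := by
    rcases zmod2_cases (φ (W.mkQ x)) with h | h
    · exact absurd h hφ
    · exact h
  refine ⟨φ.comp W.mkQ, by simpa using h1, fun y hy => ?_⟩
  have : W.mkQ y = 0 := by simpa [Submodule.mkQ_apply, Submodule.Quotient.mk_eq_zero] using hy
  simp [this]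

lemma char2_add_self (x : Vec v) : x + x = 0 := by
  have := two_smul (ZMod 2) x
  have h2 : (2 : ZMod 2) = 0 := by decide
  rw [h2, zero_smul] at this; exact this.symm

lemma dual_add_self (u : Dl v) : u + u = 0 := by
  have := two_smul (ZMod 2) u
  have h2 : (2 : ZMod 2) = 0 := by decide
  rw [h2, zero_smul] at this; exact this.symm

/-- translation bijection on filtered duals -/
lemma card_toggle (w0 : Dl v) (p q : Dl v → Prop) [DecidablePred p] [DecidablePred q]
    (h : ∀ u, p u ↔ q (u + w0)) :
    (univ.filter p).card = (univ.filter q).card := by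
  refine Finset.card_bij' (fun u _ => u + w0) (fun u _ => u + w0) ?_ ?_ ?_ ?_
  · intro a ha
    simp only [mem_filter, mem_univ, true_and] at ha ⊢
    exact (h a).1 ha
  · intro a ha
    simp only [mem_filter, mem_univ, true_and] at ha ⊢
    rw [h]
    rw [add_assoc, dual_add_self, add_zero]
    exact ha
  · intro a _; show a + w0 + w0 = a; rw [add_assoc, dual_add_self, add_zero]
  · intro a _; show a + w0 + w0 = a; rw [add_assoc, dual_add_self, add_zero]


lemma e1 {x : Vec v} (hx : x ≠ 0) : ∃ u : Dl v, u x = 1 := by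
  obtain ⟨u, hu, -⟩ := exists_dual ⊥ x (by simpa using hx)
  exact ⟨u, hu⟩

lemma e10 {x y : Vec v} (hx : x ≠ 0) (hy : y ≠ 0) (hxy : x ≠ y) :
    ∃ u : Dl v, u x = 1 ∧ u y = 0 := by
  have hnm : x ∉ Submodule.span (ZMod 2) {y} := by
    intro hmem
    rw [Submodule.mem_span_singleton] at hmem
    obtain ⟨a, ha⟩ := hmem
    rcases zmod2_cases a with h | h <;> subst h
    · rw [zero_smul] at ha; exact hx ha.symm
    · rw [one_smul] at ha; exact hxy ha.symm
  obtain ⟨u, hu, hW⟩ := exists_dual (Submodule.span (ZMod 2) {y}) x hnm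
  exact ⟨u, hu, hW y (Submodule.mem_span_singleton_self y)⟩

lemma e100 {x y z : Vec v} (hx : x ≠ 0) (hxy : x ≠ y) (hxz : x ≠ z) (hs : x ≠ y + z) :
    ∃ u : Dl v, u x = 1 ∧ u y = 0 ∧ u z = 0 := by
  have hnm : x ∉ Submodule.span (ZMod 2) ({y, z} : Set (Vec v)) := by
    intro hmem
    rw [Submodule.mem_span_pair] at hmem
    obtain ⟨a, b, hab⟩ := hmem
    rcases zmod2_cases a with h | h <;> subst h <;> rcases zmod2_cases b with h | h <;> subst h <;>
      simp only [zero_smul, one_smul, add_zero, zero_add] at hab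
    · exact hx hab.symm
    · exact hxz hab.symm
    · exact hxy hab.symm
    · exact hs hab.symm
  obtain ⟨u, hu, hW⟩ := exists_dual (Submodule.span (ZMod 2) {y, z}) x hnm
  exact ⟨u, hu, hW y (Submodule.subset_span (by simp)),
    hW z (Submodule.subset_span (by simp))⟩

/-- exact half count -/
lemma count1 {x : Vec v} (hx : x ≠ 0) :
    2 * (univ.filter fun u : Dl v => u x = 1).card = Fintype.card (Dl v) := by
  obtain ⟨u1, hu1⟩ := e1 hx
  have hsplit := Finset.card_filter_add_card_filter_not
    (s := (univ : Finset (Dl v))) (p := fun u => u x = 1)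
  have hneg : (univ.filter fun u : Dl v => ¬ u x = 1).card
      = (univ.filter fun u : Dl v => u x = 1).card := by
    apply card_toggle u1
    intro u
    have : ∀ a b : ZMod 2, b = 1 → (¬ a = 1 ↔ a + b = 1) := by decide
    simpa using (this (u x) (u1 x) hu1)
  rw [card_univ] at hsplit
  omega

/-- exact quarter count -/
lemma count11 {x y : Vec v} (hx : x ≠ 0) (hy : y ≠ 0) (hxy : x ≠ y) :
    4 * (univ.filter fun u : Dl v => u x = 1 ∧ u y = 1).card = Fintype.card (Dl v) := by
  obtain ⟨uA, hA1, hA2⟩ := e10 hx hy hxy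
  obtain ⟨uB, hB1, hB2⟩ := e10 hy hx hxy.symm
  -- fiberwise over (u x, u y)
  have hfib := Finset.card_eq_sum_card_fiberwise
    (s := (univ : Finset (Dl v))) (t := (univ : Finset (ZMod 2 × ZMod 2)))
    (f := fun u => (u x, u y)) (fun _ _ => mem_univ _)
  have hconst : ∀ t : ZMod 2 × ZMod 2,
      (univ.filter fun u : Dl v => (u x, u y) = t).card
        = (univ.filter fun u : Dl v => u x = 1 ∧ u y = 1).card := by
    intro t
    apply card_toggle ((t.1 + 1) • uA + (t.2 + 1) • uB)
    intro u
    simp only [Prod.ext_iff, LinearMap.add_apply, LinearMap.smul_apply, smul_eq_mul,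
      hA1, hA2, hB1, hB2, mul_one, mul_zero, add_zero, zero_add]
    have : ∀ a b t1 t2 : ZMod 2,
        (a = t1 ∧ b = t2) ↔ (a + (t1+1) = 1 ∧ b + (t2+1) = 1) := by decide
    exact this (u x) (u y) t.1 t.2
  rw [card_univ] at hfib
  rw [hfib, Finset.sum_congr rfl (fun t _ => hconst t), Finset.sum_const]
  simp [mul_comm]

lemma count111_le {x y z : Vec v} (hx : x ≠ 0) (hy : y ≠ 0) (hz : z ≠ 0)
    (hxy : x ≠ y) (hxz : x ≠ z) (hyz : y ≠ z) :
    8 * (univ.filter fun u : Dl v => u x = 1 ∧ u y = 1 ∧ u z = 1).card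
      ≤ Fintype.card (Dl v) := by
  by_cases hdep : x = y + z
  · -- dependent: empty
    have : (univ.filter fun u : Dl v => u x = 1 ∧ u y = 1 ∧ u z = 1) = ∅ := by
      apply Finset.filter_false_of_mem
      rintro u - ⟨h1, h2, h3⟩
      rw [hdep, map_add, h2, h3] at h1
      exact absurd h1 (by decide)
    simp [this]
  · -- independent: all 8 fibers equal
    have hadd : ∀ a b : Vec v, a + b + b = a := by
      intro a b; rw [add_assoc, char2_add_self, add_zero]
    have hyxz : y ≠ x + z := by
      intro h; exact hdep (by rw [h]; exact (hadd x z).symm)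
    have hzxy : z ≠ x + y := by
      intro h
      exact hdep (by rw [h, add_comm x y, ← add_assoc, char2_add_self, zero_add])
    obtain ⟨uA, hA1, hA2, hA3⟩ := e100 hx hxy hxz hdep
    obtain ⟨uB, hB1, hB2, hB3⟩ := e100 hy hxy.symm hyz hyxz
    obtain ⟨uC, hC1, hC2, hC3⟩ := e100 hz hxz.symm hyz.symm hzxy
    have hfib := Finset.card_eq_sum_card_fiberwise
      (s := (univ : Finset (Dl v))) (t := (univ : Finset (ZMod 2 × ZMod 2 × ZMod 2)))
      (f := fun u => (u x, u y, u z)) (fun _ _ => mem_univ _)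
    have hconst : ∀ t : ZMod 2 × ZMod 2 × ZMod 2,
        (univ.filter fun u : Dl v => (u x, u y, u z) = t).card
          = (univ.filter fun u : Dl v => u x = 1 ∧ u y = 1 ∧ u z = 1).card := by
      intro t
      apply card_toggle ((t.1 + 1) • uA + (t.2.1 + 1) • uB + (t.2.2 + 1) • uC)
      intro u
      simp only [Prod.ext_iff, LinearMap.add_apply, LinearMap.smul_apply, smul_eq_mul,
        hA1, hA2, hA3, hB1, hB2, hB3, hC1, hC2, hC3, mul_one, mul_zero, add_zero, zero_add]
      have : ∀ a b c t1 t2 t3 : ZMod 2,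
          (a = t1 ∧ b = t2 ∧ c = t3) ↔
            (a + (t1+1) = 1 ∧ b + (t2+1) = 1 ∧ c + (t3+1) = 1) := by decide
      exact this (u x) (u y) (u z) t.1 t.2.1 t.2.2
    rw [card_univ] at hfib
    rw [hfib, Finset.sum_congr rfl (fun t _ => hconst t), Finset.sum_const]
    simp [mul_comm]

lemma zsum (T : Finset (Vec v)) (h : ∀ u : Dl v, 2 ∣ (T.filter fun x => u x = 1).card) :
    ∑ x ∈ T, x = 0 := by
  rw [← Module.forall_dual_apply_eq_zero_iff (ZMod 2)]
  intro φ
  rw [map_sum]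
  have h1 : ∀ x ∈ T, φ x = (if φ x = 1 then (1 : ZMod 2) else 0) := by
    intro x _
    rcases zmod2_cases (φ x) with h' | h' <;> simp [h']
  rw [Finset.sum_congr rfl h1, Finset.sum_boole]
  have := h φ
  obtain ⟨k, hk⟩ := this
  rw [hk, Nat.cast_mul, ZMod.natCast_self, zero_mul]

lemma card_ne_one_two {T : Finset (Vec v)} (h0 : (0 : Vec v) ∉ T)
    (hs : ∑ x ∈ T, x = 0) : T.card ≠ 1 ∧ T.card ≠ 2 := by
  constructor
  · intro h1
    obtain ⟨a, ha⟩ := Finset.card_eq_one.1 h1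
    rw [ha, Finset.sum_singleton] at hs
    rw [ha, hs] at h0
    simp at h0
  · intro h2
    obtain ⟨a, b, hab, hT⟩ := Finset.card_eq_two.1 h2
    rw [hT, Finset.sum_insert (by simp [hab]), Finset.sum_singleton] at hs
    apply hab
    have : a + b + b = 0 + b := by rw [hs]
    rwa [add_assoc, char2_add_self, add_zero, zero_add] at this


lemma swap1 (p : Dl v → Prop) [DecidablePred p] (T : Finset (Vec v)) :
    ∑ u ∈ univ.filter p, (T.filter fun x => u x = 1).card
      = ∑ x ∈ T, (univ.filter fun u : Dl v => p u ∧ u x = 1).card := by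
  have h1 : ∀ u : Dl v, (T.filter fun x => u x = 1).card
      = ∑ x ∈ T, if u x = 1 then 1 else 0 := fun u => Finset.card_filter _ _
  rw [Finset.sum_congr rfl fun u _ => h1 u, Finset.sum_comm]
  refine Finset.sum_congr rfl fun x _ => ?_
  rw [Finset.card_filter, Finset.sum_filter]
  refine Finset.sum_congr rfl fun u _ => ?_
  by_cases hp : p u <;> by_cases hx : u x = 1 <;> simp [hp, hx]

lemma swap2 (p : Dl v → Prop) [DecidablePred p] (T : Finset (Vec v)) :
    ∑ u ∈ univ.filter p, (T.filter fun x => u x = 1).card * (T.filter fun x => u x = 1).card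
      = ∑ x ∈ T, ∑ y ∈ T, (univ.filter fun u : Dl v => p u ∧ u x = 1 ∧ u y = 1).card := by
  have h1 : ∀ u : Dl v, (T.filter fun x => u x = 1).card * (T.filter fun x => u x = 1).card
      = ∑ x ∈ T, ∑ y ∈ T, (if u x = 1 then 1 else 0) * (if u y = 1 then 1 else 0) := by
    intro u
    rw [Finset.card_filter, Finset.sum_mul_sum]
  rw [Finset.sum_congr rfl fun u _ => h1 u, Finset.sum_comm]
  refine Finset.sum_congr rfl fun x _ => ?_
  rw [Finset.sum_comm]
  refine Finset.sum_congr rfl fun y _ => ?_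
  rw [Finset.card_filter, Finset.sum_filter]
  refine Finset.sum_congr rfl fun u _ => ?_
  by_cases hp : p u <;> by_cases hx : u x = 1 <;> by_cases hy : u y = 1 <;> simp [hp, hx, hy]

def chi (a : ZMod 2) : ℕ := if a = 1 then 1 else 0

section M
variable (m : Vec v → ℕ)

def wm (u : Dl v) : ℕ := ∑ x, m x * chi (u x)
def Sodd : Finset (Vec v) := univ.filter fun x => ¬ 2 ∣ m x
def Abig : Finset (Vec v) := univ.filter fun x => 2 ≤ m x
def wS (u : Dl v) : ℕ := ((Sodd m).filter fun x => u x = 1).card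
def wA (u : Dl v) : ℕ := ((Abig m).filter fun x => u x = 1).card

variable {m}

lemma indsum (P : Vec v → Prop) (u : Dl v) :
    ∑ x, (if P x then 1 else 0) * chi (u x)
      = ((univ.filter P).filter fun x => u x = 1).card := by
  rw [Finset.filter_filter, Finset.card_filter]
  refine Finset.sum_congr rfl fun x _ => ?_
  by_cases h1 : P x <;> by_cases h2 : u x = 1 <;> simp [chi, h1, h2]

variable (hm3 : ∀ x, m x ≤ 3)
include hm3

lemma m_decomp : ∀ x, m x = 2 * (if 2 ≤ m x then 1 else 0) + (if ¬ 2 ∣ m x then 1 else 0) := by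
  intro x; have := hm3 x
  by_cases h2 : 2 ≤ m x <;> by_cases hd : 2 ∣ m x <;> simp [h2, hd] <;> omega

lemma w_split (u : Dl v) : wm m u = 2 * wA m u + wS m u := by
  unfold wm wA wS Sodd Abig
  rw [Finset.card_filter, Finset.card_filter, Finset.sum_filter, Finset.sum_filter,
    Finset.mul_sum, ← Finset.sum_add_distrib]
  refine Finset.sum_congr rfl fun x _ => ?_
  have := hm3 x
  by_cases h2 : 2 ≤ m x <;> by_cases hdd : 2 ∣ m x <;> by_cases h1 : u x = 1 <;>
    simp [h2, hdd, h1, chi] <;> omega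

lemma card_split : 2 * (Abig m).card + (Sodd m).card = (∑ x, m x) := by
  unfold Abig Sodd
  rw [Finset.card_filter, Finset.card_filter, Finset.mul_sum, ← Finset.sum_add_distrib]
  refine (Finset.sum_congr rfl fun x _ => ?_).symm
  have := hm3 x
  by_cases h2 : 2 ≤ m x <;> by_cases hdd : 2 ∣ m x <;> simp [h2, hdd] <;> omega

variable (hw : ∀ u : Dl v, 4 ∣ wm m u)
include hw

lemma wS_even (u : Dl v) : 2 ∣ wS m u := by
  have h1 := hw u
  have h2 := w_split hm3 (m := m) u
  omega

lemma B_even (u u' : Dl v) : 2 ∣ ∑ x, m x * (chi (u x) * chi (u' x)) := by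
  have pt : ∀ a b : ZMod 2, chi a + chi b = chi (a + b) + 2 * (chi a * chi b) := by decide
  have key : wm m u + wm m u' = wm m (u + u') + 2 * ∑ x, m x * (chi (u x) * chi (u' x)) := by
    unfold wm
    rw [← Finset.sum_add_distrib, Finset.mul_sum, ← Finset.sum_add_distrib]
    refine Finset.sum_congr rfl fun x _ => ?_
    rw [LinearMap.add_apply, ← mul_add, pt (u x) (u' x)]; ring
  have h1 := hw u; have h2 := hw u'; have h3 := hw (u + u')
  omega

lemma Tu_zerosum (u : Dl v) : ∑ x ∈ (Sodd m).filter (fun x => u x = 1), x = 0 := by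
  apply zsum
  intro u'
  have hB := B_even hm3 hw u u'
  -- parity transfer from m to indicator of Sodd
  have hdec : ∀ x : Vec v, m x * (chi (u x) * chi (u' x))
      = 2 * ((m x / 2) * (chi (u x) * chi (u' x)))
        + (if ¬ 2 ∣ m x then 1 else 0) * (chi (u x) * chi (u' x)) := by
    intro x
    have hk : m x = 2 * (m x / 2) + (if ¬ 2 ∣ m x then 1 else 0) := by
      by_cases hd : 2 ∣ m x <;> simp [hd] <;> omega
    conv_lhs => rw [hk]
    ring
  rw [Finset.sum_congr rfl (fun x _ => hdec x), Finset.sum_add_distrib, ← Finset.mul_sum] at hB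
  have hI : ∑ x, (if ¬ 2 ∣ m x then 1 else 0) * (chi (u x) * chi (u' x))
      = (((Sodd m).filter fun x => u x = 1).filter fun x => u' x = 1).card := by
    unfold Sodd
    rw [Finset.filter_filter, Finset.filter_filter, Finset.card_filter]
    refine Finset.sum_congr rfl fun x _ => ?_
    by_cases h1 : ¬ 2 ∣ m x <;> by_cases h2 : u x = 1 <;> by_cases h3 : u' x = 1 <;>
      simp [chi, h1, h2, h3]
  rw [hI] at hB
  omega

theorem S_zerosum : ∑ x ∈ Sodd m, x = 0 := by
  apply zsum
  intro u'
  exact wS_even hm3 hw u'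

end M

theorem core (m : Vec v → ℕ) (h0 : m 0 = 0) (hm3 : ∀ x, m x ≤ 3)
    (hsum : ∑ x, m x = 12) (hw : ∀ u : Dl v, 4 ∣ wm m u) : ∀ x, 2 ∣ m x := by
  by_contra hc
  push_neg at hc
  obtain ⟨x', hx'⟩ := hc
  have hx'S : x' ∈ Sodd m := by
    simp only [Sodd, mem_filter, mem_univ, true_and]; exact hx'
  have hS0 : (0 : Vec v) ∉ Sodd m := by simp [Sodd, h0]
  have hA0 : (0 : Vec v) ∉ Abig m := by simp [Abig, h0]
  have h12 : 2 * (Abig m).card + (Sodd m).card = 12 := by rw [card_split hm3, hsum]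
  have hSpos : 1 ≤ (Sodd m).card := Finset.card_pos.2 ⟨x', hx'S⟩
  have hSsum := S_zerosum hm3 hw
  have hDpos : 1 ≤ Fintype.card (Dl v) := Fintype.card_pos_iff.2 ⟨0⟩
  -- members of Sodd are nonzero
  have hSnz : ∀ x ∈ Sodd m, x ≠ 0 := by
    intro x hx h; rw [h] at hx; exact hS0 hx
  -- complement facts
  have hfacts : ∀ u : Dl v, ∃ c : ℕ,
      wS m u + c = (Sodd m).card ∧ wS m u ≠ 1 ∧ wS m u ≠ 2 ∧ c ≠ 1 ∧ c ≠ 2 := by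
    intro u
    refine ⟨((Sodd m).filter fun x => ¬ u x = 1).card, ?_, ?_⟩
    · exact Finset.card_filter_add_card_filter_not _
    · have ht := card_ne_one_two (T := (Sodd m).filter fun x => u x = 1)
        (fun hmem => hS0 (Finset.mem_of_mem_filter _ hmem)) (Tu_zerosum hm3 hw u)
      have hcsum : ∑ x ∈ (Sodd m).filter (fun x => ¬ u x = 1), x = 0 := by
        have hsplit := Finset.sum_filter_add_sum_filter_not (Sodd m)
          (fun x => u x = 1) (fun x => x)
        rw [Tu_zerosum hm3 hw u, zero_add] at hsplit
        rw [hsplit, hSsum]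
      have hc := card_ne_one_two (T := (Sodd m).filter fun x => ¬ u x = 1)
        (fun hmem => hS0 (Finset.mem_of_mem_filter _ hmem)) hcsum
      exact ⟨ht.1, ht.2, hc.1, hc.2⟩
  have hcases : (Sodd m).card = 2 ∨ (Sodd m).card = 4 ∨ (Sodd m).card = 6 ∨
      (Sodd m).card = 8 ∨ (Sodd m).card = 10 ∨ (Sodd m).card = 12 := by omega
  -- small cases: card ≤ 6
  have key246 : 1 < (Sodd m).card → (Sodd m).card ≤ 6 → False := by
    intro h2lt hle
    obtain ⟨x0, hx0, x1, hx1, hne⟩ := Finset.one_lt_card.1 h2lt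
    obtain ⟨u, hu1, hu0⟩ := e10 (hSnz x0 hx0) (hSnz x1 hx1) hne
    obtain ⟨c, hcs, h1, h2, hc1, hc2⟩ := hfacts u
    have heve := wS_even hm3 hw u
    have hge1 : 1 ≤ wS m u :=
      Finset.card_pos.2 ⟨x0, Finset.mem_filter.2 ⟨hx0, hu1⟩⟩
    have hlt : wS m u < (Sodd m).card := by
      apply Finset.card_lt_card
      exact Finset.filter_ssubset.2 ⟨x1, hx1, by rw [hu0]; decide⟩
    omega
  rcases hcases with hs | hs | hs | hs | hs | hs
  · exact key246 (by omega) (by omega)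
  · exact key246 (by omega) (by omega)
  · exact key246 (by omega) (by omega)
  · -- card 8
    have h4S : ∀ u : Dl v, 4 ∣ wS m u := by
      intro u
      obtain ⟨c, hcs, h1, h2, hc1, hc2⟩ := hfacts u
      have heve := wS_even hm3 hw u
      omega
    have hwAeven : ∀ u : Dl v, 2 ∣ ((Abig m).filter fun x => u x = 1).card := by
      intro u
      have h1 := hw u
      have h2 := w_split hm3 (m := m) u
      have h3 := h4S u
      unfold wA at h2
      omega
    have hAsum : ∑ x ∈ Abig m, x = 0 := zsum _ hwAeven
    have hA2 : (Abig m).card = 2 := by omega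
    exact (card_ne_one_two hA0 hAsum).2 hA2
  · -- card 10
    have hA1 : (Abig m).card = 1 := by omega
    obtain ⟨z, hz⟩ := Finset.card_eq_one.1 hA1
    have hzA : z ∈ Abig m := by rw [hz]; exact Finset.mem_singleton_self z
    have hznz : z ≠ 0 := fun h => hA0 (h ▸ hzA)
    have hwAz : ∀ u : Dl v, u z = 1 → wA m u = 1 := by
      intro u hu
      unfold wA
      rw [hz, Finset.filter_singleton, if_pos hu, Finset.card_singleton]
    have hstep : ∀ u ∈ univ.filter (fun u : Dl v => u z = 1), 6 ≤ wS m u := by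
      intro u hu
      rw [mem_filter] at hu
      obtain ⟨c, hcs, h1, h2, hc1, hc2⟩ := hfacts u
      have hwu := hw u
      have hsp := w_split hm3 (m := m) u
      rw [hwAz u hu.2] at hsp
      omega
    have hlow : 6 * (univ.filter (fun u : Dl v => u z = 1)).card
        ≤ ∑ u ∈ univ.filter (fun u : Dl v => u z = 1), wS m u := by
      calc 6 * (univ.filter (fun u : Dl v => u z = 1)).card
          = ∑ _u ∈ univ.filter (fun u : Dl v => u z = 1), 6 := by
            rw [Finset.sum_const, smul_eq_mul, mul_comm]
        _ ≤ _ := Finset.sum_le_sum hstep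
    have hup : 4 * ∑ u ∈ univ.filter (fun u : Dl v => u z = 1), wS m u
        ≤ 11 * Fintype.card (Dl v) := by
      have hsw : ∑ u ∈ univ.filter (fun u : Dl v => u z = 1), wS m u
          = ∑ x ∈ Sodd m, (univ.filter fun u : Dl v => u z = 1 ∧ u x = 1).card := by
        simpa only [wS] using swap1 (fun u : Dl v => u z = 1) (Sodd m)
      rw [hsw, Finset.mul_sum]
      have hterm : ∀ x ∈ Sodd m,
          4 * (univ.filter fun u : Dl v => u z = 1 ∧ u x = 1).card
            = Fintype.card (Dl v) + (if x = z then Fintype.card (Dl v) else 0) := by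
        intro x hx
        by_cases hxz : x = z
        · subst hxz
          have hcongr : (univ.filter fun u : Dl v => u x = 1 ∧ u x = 1)
              = univ.filter (fun u : Dl v => u x = 1) := by
            apply Finset.filter_congr
            intro u _
            tauto
          rw [hcongr, if_pos rfl]
          have := count1 (v := v) hznz
          omega
        · rw [count11 hznz (hSnz x hx) (fun h => hxz h.symm), if_neg hxz, add_zero]
      rw [Finset.sum_congr rfl hterm, Finset.sum_add_distrib, Finset.sum_const,
        Finset.sum_ite_eq' (Sodd m) z (fun _ => Fintype.card (Dl v)), smul_eq_mul, hs]
      by_cases hzS : z ∈ Sodd m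
      · rw [if_pos hzS]; omega
      · rw [if_neg hzS]; omega
    have hU1card := count1 (v := v) hznz
    omega
  · -- card 12
    set D := Fintype.card (Dl v) with hD
    have hx0nz := hSnz x' hx'S
    have hAe : (Abig m) = ∅ := Finset.card_eq_zero.1 (by omega)
    have h4S : ∀ u : Dl v, 4 ∣ wS m u := by
      intro u
      have h1 := hw u
      have h2 := w_split hm3 (m := m) u
      have h3 : wA m u = 0 := by
        unfold wA; rw [hAe]; rfl
      omega
    have hge : ∀ u ∈ univ.filter (fun u : Dl v => u x' = 1), 1 ≤ wS m u := by
      intro u hu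
      rw [mem_filter] at hu
      exact Finset.card_pos.2 ⟨x', Finset.mem_filter.2 ⟨hx'S, hu.2⟩⟩
    have hle12 : ∀ u : Dl v, wS m u ≤ 12 := by
      intro u
      have := Finset.card_filter_le (Sodd m) (fun x => u x = 1)
      unfold wS
      omega
    have hquad : ∀ u ∈ univ.filter (fun u : Dl v => u x' = 1),
        12 * wS m u ≤ wS m u * wS m u + 32 := by
      intro u hu
      have h4 := h4S u
      have h1 := hge u hu
      have h2 := hle12 u
      have hcase : wS m u = 4 ∨ wS m u = 8 ∨ wS m u = 12 := by omega
      rcases hcase with h | h | h <;> rw [h] <;> norm_num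
    have hsum1 : 12 * ∑ u ∈ univ.filter (fun u : Dl v => u x' = 1), wS m u
        ≤ (∑ u ∈ univ.filter (fun u : Dl v => u x' = 1), wS m u * wS m u)
          + 32 * (univ.filter (fun u : Dl v => u x' = 1)).card := by
      calc 12 * ∑ u ∈ univ.filter (fun u : Dl v => u x' = 1), wS m u
          = ∑ u ∈ univ.filter (fun u : Dl v => u x' = 1), 12 * wS m u := Finset.mul_sum _ _ _
        _ ≤ ∑ u ∈ univ.filter (fun u : Dl v => u x' = 1), (wS m u * wS m u + 32) :=
            Finset.sum_le_sum hquad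
        _ = _ := by rw [Finset.sum_add_distrib, Finset.sum_const, smul_eq_mul, mul_comm]
    have hS1 : 4 * ∑ u ∈ univ.filter (fun u : Dl v => u x' = 1), wS m u = 13 * D := by
      have hsw : ∑ u ∈ univ.filter (fun u : Dl v => u x' = 1), wS m u
          = ∑ x ∈ Sodd m, (univ.filter fun u : Dl v => u x' = 1 ∧ u x = 1).card := by
        simpa only [wS] using swap1 (fun u : Dl v => u x' = 1) (Sodd m)
      rw [hsw, Finset.mul_sum]
      have hterm : ∀ x ∈ Sodd m,
          4 * (univ.filter fun u : Dl v => u x' = 1 ∧ u x = 1).card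
            = D + (if x = x' then D else 0) := by
        intro x hx
        by_cases hxx : x = x'
        · subst hxx
          have hcongr : (univ.filter fun u : Dl v => u x = 1 ∧ u x = 1)
              = univ.filter (fun u : Dl v => u x = 1) := by
            apply Finset.filter_congr
            intro u _
            tauto
          rw [hcongr, if_pos rfl]
          have := count1 (v := v) hx0nz
          omega
        · rw [count11 hx0nz (hSnz x hx) (fun h => hxx h.symm), if_neg hxx, add_zero]
      rw [Finset.sum_congr rfl hterm, Finset.sum_add_distrib, Finset.sum_const,
        Finset.sum_ite_eq' (Sodd m) x' (fun _ => D), smul_eq_mul, hs, if_pos hx'S]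
      ring
    have hS2 : 8 * ∑ u ∈ univ.filter (fun u : Dl v => u x' = 1), wS m u * wS m u
        ≤ 180 * D := by
      have hsw : ∑ u ∈ univ.filter (fun u : Dl v => u x' = 1), wS m u * wS m u
          = ∑ x ∈ Sodd m, ∑ y ∈ Sodd m,
              (univ.filter fun u : Dl v => u x' = 1 ∧ u x = 1 ∧ u y = 1).card := by
        simpa only [wS] using swap2 (fun u : Dl v => u x' = 1) (Sodd m)
      rw [hsw]
      have hterm : ∀ x ∈ Sodd m, ∀ y ∈ Sodd m,
          8 * (univ.filter fun u : Dl v => u x' = 1 ∧ u x = 1 ∧ u y = 1).card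
            ≤ (if x = x' ∧ y = x' then 4 * D
               else if x = y ∨ x = x' ∨ y = x' then 2 * D else D) := by
        intro x hx y hy
        by_cases hxx : x = x' <;> by_cases hyy : y = x'
        · have hcongr : (univ.filter fun u : Dl v => u x' = 1 ∧ u x = 1 ∧ u y = 1)
              = univ.filter (fun u : Dl v => u x' = 1) := by
            apply Finset.filter_congr; intro u _; rw [hxx, hyy]; tauto
          rw [hcongr, if_pos ⟨hxx, hyy⟩]
          have := count1 (v := v) hx0nz
          omega
        · have hcongr : (univ.filter fun u : Dl v => u x' = 1 ∧ u x = 1 ∧ u y = 1)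
              = univ.filter (fun u : Dl v => u x' = 1 ∧ u y = 1) := by
            apply Finset.filter_congr; intro u _; rw [hxx]; tauto
          rw [hcongr, if_neg (by tauto), if_pos (by tauto)]
          have := count11 hx0nz (hSnz y hy) (fun h => hyy h.symm)
          omega
        · have hcongr : (univ.filter fun u : Dl v => u x' = 1 ∧ u x = 1 ∧ u y = 1)
              = univ.filter (fun u : Dl v => u x' = 1 ∧ u x = 1) := by
            apply Finset.filter_congr; intro u _; rw [hyy]; tauto
          rw [hcongr, if_neg (by tauto), if_pos (by tauto)]
          have := count11 hx0nz (hSnz x hx) (fun h => hxx h.symm)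
          omega
        · by_cases hxy : x = y
          · have hcongr : (univ.filter fun u : Dl v => u x' = 1 ∧ u x = 1 ∧ u y = 1)
                = univ.filter (fun u : Dl v => u x' = 1 ∧ u x = 1) := by
              apply Finset.filter_congr; intro u _; rw [hxy]; tauto
            rw [hcongr, if_neg (by tauto), if_pos (by tauto)]
            have := count11 hx0nz (hSnz x hx) (fun h => hxx h.symm)
            omega
          · rw [if_neg (by tauto), if_neg (by tauto)]
            exact count111_le hx0nz (hSnz x hx) (hSnz y hy)
              (fun h => hxx h.symm) (fun h => hyy h.symm) hxy
      have hbsum : ∑ x ∈ Sodd m, ∑ y ∈ Sodd m,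
          (if x = x' ∧ y = x' then 4 * D
           else if x = y ∨ x = x' ∨ y = x' then 2 * D else D) = 180 * D := by
        have herase : ((Sodd m).erase x').card = 11 := by
          rw [Finset.card_erase_of_mem hx'S, hs]
        rw [← Finset.add_sum_erase _ _ hx'S]
        have hrow1 : ∑ y ∈ Sodd m,
            (if x' = x' ∧ y = x' then 4 * D
             else if x' = y ∨ x' = x' ∨ y = x' then 2 * D else D) = 26 * D := by
          have hpt : ∀ y ∈ Sodd m,
              (if x' = x' ∧ y = x' then 4 * D
               else if x' = y ∨ x' = x' ∨ y = x' then 2 * D else D)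
                = 2 * D + (if y = x' then 2 * D else 0) := by
            intro y _
            by_cases h : y = x' <;> simp [h] <;> ring
          rw [Finset.sum_congr rfl hpt, Finset.sum_add_distrib, Finset.sum_const,
            Finset.sum_ite_eq' (Sodd m) x' (fun _ => 2 * D), if_pos hx'S, smul_eq_mul, hs]
          ring
        have hrow2 : ∀ x ∈ (Sodd m).erase x', ∑ y ∈ Sodd m,
            (if x = x' ∧ y = x' then 4 * D
             else if x = y ∨ x = x' ∨ y = x' then 2 * D else D) = 14 * D := by
          intro x hxe
          have hxS : x ∈ Sodd m := Finset.mem_of_mem_erase hxe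
          have hxx : x ≠ x' := Finset.ne_of_mem_erase hxe
          have hpt : ∀ y ∈ Sodd m,
              (if x = x' ∧ y = x' then 4 * D
               else if x = y ∨ x = x' ∨ y = x' then 2 * D else D)
                = D + (if y = x ∨ y = x' then D else 0) := by
            intro y _
            have hx'y : ¬ (x = x' ∧ y = x') := fun h => hxx h.1
            by_cases h1 : y = x
            · rw [if_neg hx'y, if_pos (Or.inl h1.symm), if_pos (Or.inl h1)]; ring
            · by_cases h2 : y = x'
              · rw [if_neg hx'y, if_pos (Or.inr (Or.inr h2)), if_pos (Or.inr h2)]; ring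
              · rw [if_neg hx'y,
                  if_neg (by rintro (h | h | h); exacts [h1 h.symm, hxx h, h2 h]),
                  if_neg (by rintro (h | h); exacts [h1 h, h2 h])]
                ring
          rw [Finset.sum_congr rfl hpt, Finset.sum_add_distrib, Finset.sum_const,
            smul_eq_mul, hs]
          have hfil : ∑ y ∈ Sodd m, (if y = x ∨ y = x' then D else 0)
              = ∑ y ∈ (Sodd m).filter (fun y => y = x ∨ y = x'), D := by
            rw [Finset.sum_filter]
          have hset : (Sodd m).filter (fun y => y = x ∨ y = x') = {x, x'} := by
            ext y
            simp only [Finset.mem_filter, Finset.mem_insert, Finset.mem_singleton]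
            constructor
            · rintro ⟨-, h⟩; exact h
            · rintro (rfl | rfl)
              · exact ⟨hxS, Or.inl rfl⟩
              · exact ⟨hx'S, Or.inr rfl⟩
          rw [hfil, hset, Finset.sum_const, Finset.card_insert_of_notMem
            (by simp [hxx]), Finset.card_singleton, smul_eq_mul]
          ring
        rw [hrow1, Finset.sum_congr rfl hrow2, Finset.sum_const, herase, smul_eq_mul]
        ring
      calc 8 * ∑ x ∈ Sodd m, ∑ y ∈ Sodd m,
            (univ.filter fun u : Dl v => u x' = 1 ∧ u x = 1 ∧ u y = 1).card
          = ∑ x ∈ Sodd m, ∑ y ∈ Sodd m,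
              8 * (univ.filter fun u : Dl v => u x' = 1 ∧ u x = 1 ∧ u y = 1).card := by
            rw [Finset.mul_sum]
            exact Finset.sum_congr rfl fun x _ => Finset.mul_sum _ _ _
        _ ≤ ∑ x ∈ Sodd m, ∑ y ∈ Sodd m,
              (if x = x' ∧ y = x' then 4 * D
               else if x = y ∨ x = x' ∨ y = x' then 2 * D else D) :=
            Finset.sum_le_sum fun x hx => Finset.sum_le_sum fun y hy => hterm x hx y hy
        _ = 180 * D := hbsum
    have hUcard := count1 (v := v) hx0nz
    omega


noncomputable instance (v : ℕ) : Fintype (Projectivization (ZMod 2) (Vec v)) := by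
  have : Finite (Projectivization (ZMod 2) (Vec v)) := Quotient.finite _
  exact Fintype.ofFinite _

lemma mk_inj {x y : Vec v} (hx : x ≠ 0) (hy : y ≠ 0)
    (h : Projectivization.mk (ZMod 2) x hx = Projectivization.mk (ZMod 2) y hy) : x = y := by
  rw [Projectivization.mk_eq_mk_iff] at h
  obtain ⟨a, ha⟩ := h
  have h1 : (a : ZMod 2) = 1 := by
    rcases zmod2_cases (a : ZMod 2) with h' | h'
    · exact absurd h' a.ne_zero
    · exact h'
  rw [Units.smul_def, h1, one_smul] at ha
  exact ha.symm

noncomputable def mfun (M : Projectivization (ZMod 2) (Vec v) → ℕ) (x : Vec v) : ℕ :=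
  if h : x = 0 then 0 else M (Projectivization.mk (ZMod 2) x h)

lemma mfun_rep (M : Projectivization (ZMod 2) (Vec v) → ℕ)
    (P : Projectivization (ZMod 2) (Vec v)) : mfun M P.rep = M P := by
  rw [mfun, dif_neg P.rep_nonzero]
  exact congrArg M (Projectivization.mk_rep P)

lemma MVal_eq (M : Projectivization (ZMod 2) (Vec v) → ℕ) (K : Submodule (ZMod 2) (Vec v)) :
    MVal M K = ∑ x ∈ univ.filter (fun x : Vec v => x ≠ 0 ∧ x ∈ K), mfun M x := by
  unfold MVal
  rw [finsum_mem_eq_finite_toFinset_sum _ (Set.toFinite _)]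
  refine Finset.sum_bij (fun P _ => P.rep) ?_ ?_ ?_ ?_
  · intro P hP
    rw [Set.Finite.mem_toFinset, Set.mem_setOf_eq] at hP
    rw [mem_filter]
    refine ⟨mem_univ _, P.rep_nonzero, ?_⟩
    rw [Projectivization.submodule_eq, Submodule.span_singleton_le_iff_mem] at hP
    exact hP
  · intro P hP Q hQ h
    rw [← Projectivization.mk_rep P, ← Projectivization.mk_rep Q]
    congr 1
  · intro x hx
    rw [mem_filter] at hx
    obtain ⟨-, hx0, hxK⟩ := hx
    refine ⟨Projectivization.mk (ZMod 2) x hx0, ?_, ?_⟩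
    · rw [Set.Finite.mem_toFinset, Set.mem_setOf_eq, Projectivization.submodule_mk,
        Submodule.span_singleton_le_iff_mem]
      exact hxK
    · exact mk_inj (Projectivization.rep_nonzero _) hx0
        (by rw [Projectivization.mk_rep])
  · intro P hP
    exact (mfun_rep M P).symm


theorem stmt9_aux (v : ℕ) (M : Projectivization (ZMod 2) (Fin v → ZMod 2) → ℕ)
    (hdiv : IsDivisible 4 M) (hcard : MVal M ⊤ = 12) (hγ : ∀ P, M P ≤ 3) :
    (∀ P, 2 ∣ M P) ∧ IsDivisible 2 (fun P => M P / 2) ∧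
      MVal (fun P => M P / 2) ⊤ = 6 := by
  classical
  set m : Vec v → ℕ := mfun M with hm
  have h0 : m 0 = 0 := by rw [hm]; simp [mfun]
  have hm3 : ∀ x, m x ≤ 3 := by
    intro x
    rw [hm]
    by_cases h : x = 0 <;> simp [mfun, h]
    exact hγ _
  have htop : MVal M ⊤ = ∑ x, m x := by
    rw [MVal_eq]
    apply Finset.sum_filter_of_ne
    intro x _ hx
    refine ⟨fun h => hx ?_, Submodule.mem_top⟩
    rw [h]
    simp [mfun]
  have hsum : ∑ x, m x = 12 := by rw [← htop, hcard]
  have hw4 : ∀ u : Dl v, 4 ∣ wm m u := by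
    intro u
    by_cases hu : u = 0
    · subst hu
      have hz : wm m 0 = 0 := by
        unfold wm chi
        simp
      rw [hz]
      exact dvd_zero 4
    · obtain ⟨x1, hx1⟩ : ∃ x, u x ≠ 0 := by
        by_contra hcon
        push_neg at hcon
        exact hu (LinearMap.ext fun x => hcon x)
      have hx1' : u x1 = 1 := by
        rcases zmod2_cases (u x1) with h | h
        · exact absurd h hx1
        · exact h
      have hsurj : Function.Surjective u := by
        intro c
        exact ⟨c • x1, by rw [map_smul, hx1', smul_eq_mul, mul_one]⟩
      have hrange : LinearMap.range u = ⊤ := LinearMap.range_eq_top.2 hsurj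
      have hr := LinearMap.finrank_range_add_finrank_ker u
      rw [hrange] at hr
      have hr1 : Module.finrank (ZMod 2) (⊤ : Submodule (ZMod 2) (ZMod 2)) = 1 := by
        rw [finrank_top, Module.finrank_self]
      have hVeq : Module.finrank (ZMod 2) (Vec v)
          = Module.finrank (ZMod 2) (Fin v → ZMod 2) := rfl
      have hker : Module.finrank (ZMod 2) (LinearMap.ker u) + 1
          = Module.finrank (ZMod 2) (Fin v → ZMod 2) := by omega
      have hdH := hdiv (LinearMap.ker u) hker
      rw [hcard] at hdH
      have hdvd : 4 ∣ MVal M (LinearMap.ker u) := by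
        have h' : MVal M (LinearMap.ker u) % 4 = 12 % 4 := hdH
        omega
      have hA : wm m u = ∑ x ∈ univ.filter (fun x : Vec v => u x = 1), m x := by
        unfold wm chi
        rw [Finset.sum_filter]
        refine Finset.sum_congr rfl fun x _ => ?_
        by_cases h : u x = 1 <;> simp [h]
      have hB : MVal M (LinearMap.ker u)
          = ∑ x ∈ univ.filter (fun x : Vec v => ¬ u x = 1), m x := by
        rw [MVal_eq]
        apply Finset.sum_subset
        · intro x hx
          rw [mem_filter] at hx ⊢
          obtain ⟨-, -, hk⟩ := hx
          rw [LinearMap.mem_ker] at hk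
          refine ⟨mem_univ _, ?_⟩
          rw [hk]
          decide
        · intro x hx hnx
          rw [mem_filter] at hx hnx
          push_neg at hnx
          have hx0 : u x = 0 := by
            rcases zmod2_cases (u x) with h | h
            · exact h
            · exact absurd h hx.2
          have := hnx hx.1
          by_cases hxz : x = 0
          · rw [hxz]; simp [mfun]
          · exact absurd (LinearMap.mem_ker.2 hx0) (this hxz)
      have hsplit := Finset.sum_filter_add_sum_filter_not (univ : Finset (Vec v))
        (fun x => u x = 1) m
      rw [hsum] at hsplit
      rw [hA]
      rw [hB] at hdvd
      omega
  have heven := core m h0 hm3 hsum hw4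
  -- halving
  have hhalf : ∀ K : Submodule (ZMod 2) (Vec v),
      MVal M K = 2 * MVal (fun P => M P / 2) K := by
    intro K
    rw [MVal_eq, MVal_eq, Finset.mul_sum]
    refine Finset.sum_congr rfl fun x _ => ?_
    by_cases h : x = 0
    · simp [mfun, h]
    · have h2 : 2 ∣ M (Projectivization.mk (ZMod 2) x h) := by
        have := heven x
        rw [hm] at this
        unfold mfun at this
        rwa [dif_neg h] at this
      simp only [mfun, dif_neg h]
      omega
  refine ⟨?_, ?_, ?_⟩
  · intro P
    have h1 := heven P.rep
    rw [hm, mfun_rep] at h1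
    exact h1
  · intro H hH
    have h1 := hdiv H hH
    have h2 := hhalf H
    have h3 := hhalf ⊤
    rw [hcard] at h3
    have h1' : MVal M H % 4 = MVal M ⊤ % 4 := h1
    show MVal (fun P => M P / 2) H % 2 = MVal (fun P => M P / 2) ⊤ % 2
    rw [hcard] at h1'
    omega
  · have h3 := hhalf ⊤
    rw [hcard] at h3
    omega

end S9

theorem stmt_9 (v : ℕ) (M : Projectivization (ZMod 2) (Fin v → ZMod 2) → ℕ)
    (hdiv : IsDivisible 4 M) (hcard : MVal M ⊤ = 12) (hγ : ∀ P, M P ≤ 3) :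
    (∀ P, 2 ∣ M P) ∧ IsDivisible 2 (fun P => M P / 2) ∧
      MVal (fun P => M P / 2) ⊤ = 6 :=
  S9.stmt9_aux v M hdiv hcard hγ
end

section
/- There is no 4-divisible multiset of points in PG(v-1,2) of cardinality 9, for any v. -/
open scoped Classical

namespace Stmt12Aux

abbrev Vv (v : ℕ) := Fin v → ZMod 2

/-- multiplicity function on vectors -/
noncomputable def mm (v : ℕ) (M : Projectivization (ZMod 2) (Vv v) → ℕ) (x : Vv v) : ℕ :=
  if h : x = 0 then 0 else M (Projectivization.mk (ZMod 2) x h)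

def dot {v : ℕ} (x y : Vv v) : ZMod 2 := ∑ i, x i * y i

lemma zmod2_ne_zero : ∀ u : ZMod 2, u ≠ 0 → u = 1 := by decide

instance {v : ℕ} : Finite (Projectivization (ZMod 2) (Vv v)) :=
  Quotient.finite _

lemma mk_inj {v : ℕ} (x y : Vv v) (hx : x ≠ 0) (hy : y ≠ 0)
    (h : Projectivization.mk (ZMod 2) x hx = Projectivization.mk (ZMod 2) y hy) : x = y := by
  rw [Projectivization.mk_eq_mk_iff] at h
  obtain ⟨a, ha⟩ := h
  have h1 : (a : ZMod 2) = 1 := zmod2_ne_zero _ a.ne_zero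
  rw [Units.smul_def, h1, one_smul] at ha
  exact ha.symm

lemma mval_eq {v : ℕ} (M : Projectivization (ZMod 2) (Vv v) → ℕ)
    (K : Submodule (ZMod 2) (Vv v)) :
    MVal M K = ∑ x ∈ Finset.univ.filter (fun x => x ∈ K), mm v M x := by
  classical
  have hfin : {P : Projectivization (ZMod 2) (Vv v) | P.submodule ≤ K}.Finite :=
    Set.toFinite _
  rw [MVal, finsum_mem_eq_finite_toFinset_sum _ hfin]
  have hsub : Finset.univ.filter (fun x : Vv v => x ∈ K ∧ x ≠ 0) ⊆
      Finset.univ.filter (fun x => x ∈ K) := by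
    intro x hx
    simp only [Finset.mem_filter, Finset.mem_univ, true_and] at hx ⊢
    exact hx.1
  rw [← Finset.sum_subset hsub (by
    intro x hx hx'
    simp only [Finset.mem_filter, Finset.mem_univ, true_and] at hx hx'
    have : x = 0 := by tauto
    simp [mm, this])]
  refine Finset.sum_bij' (fun P _ => P.rep)
    (fun x hx => Projectivization.mk (ZMod 2) x (by
      simp only [Finset.mem_filter, Finset.mem_univ, true_and] at hx; exact hx.2))
    ?_ ?_ ?_ ?_ ?_
  · intro P hP
    rw [Set.Finite.mem_toFinset] at hP
    simp only [Finset.mem_filter, Finset.mem_univ, true_and]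
    refine ⟨hP ?_, P.rep_nonzero⟩
    rw [Projectivization.submodule_eq]
    exact Submodule.mem_span_singleton_self _
  · intro x hx
    rw [Set.Finite.mem_toFinset]
    simp only [Finset.mem_filter, Finset.mem_univ, true_and] at hx
    show (Projectivization.mk (ZMod 2) x _).submodule ≤ K
    rw [Projectivization.submodule_mk]
    exact (Submodule.span_singleton_le_iff_mem _ _).2 hx.1
  · intro P hP
    exact Projectivization.mk_rep P
  · intro x hx
    simp only [Finset.mem_filter, Finset.mem_univ, true_and] at hx
    exact mk_inj _ x (Projectivization.rep_nonzero _) hx.2 (by rw [Projectivization.mk_rep])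
  · intro P hP
    rw [mm, dif_neg P.rep_nonzero, Projectivization.mk_rep]

/-- the functional ⟨·, y⟩ -/
def phi {v : ℕ} (y : Vv v) : Vv v →ₗ[ZMod 2] ZMod 2 where
  toFun x := dot x y
  map_add' a b := by
    simp [dot, add_mul, Finset.sum_add_distrib]
  map_smul' c a := by
    simp [dot, Finset.mul_sum, mul_assoc]

lemma phi_apply {v : ℕ} (y x : Vv v) : phi y x = dot x y := rfl

lemma dot_single {v : ℕ} (x : Vv v) (j : Fin v) :
    dot (Pi.single j (1 : ZMod 2)) x = x j := by
  rw [dot]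
  rw [Finset.sum_eq_single j]
  · simp
  · intro i _ hij
    simp [Pi.single_eq_of_ne hij]
  · simp

lemma dot_single' {v : ℕ} (x : Vv v) (j : Fin v) :
    dot x (Pi.single j (1 : ZMod 2)) = x j := by
  rw [dot]
  rw [Finset.sum_eq_single j]
  · simp
  · intro i _ hij
    simp [Pi.single_eq_of_ne hij]
  · simp

lemma dot_add_right {v : ℕ} (x a b : Vv v) : dot x (a + b) = dot x a + dot x b := by
  simp [dot, mul_add, Finset.sum_add_distrib]

lemma finrank_ker {v : ℕ} (y : Vv v) (hy : y ≠ 0) :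
    Module.finrank (ZMod 2) (LinearMap.ker (phi y)) + 1 = v := by
  obtain ⟨j, hj⟩ := Function.ne_iff.1 hy
  have hsurj : Function.Surjective (phi y) := by
    intro c
    refine ⟨c • Pi.single j 1, ?_⟩
    rw [map_smul]
    have : phi y (Pi.single j (1 : ZMod 2)) = 1 := by
      rw [phi_apply, dot_single, zmod2_ne_zero _ hj]
    rw [this]
    simp
  have h1 : LinearMap.range (phi y) = ⊤ := LinearMap.range_eq_top.2 hsurj
  have h2 := LinearMap.finrank_range_add_finrank_ker (phi y)
  rw [h1] at h2
  rw [finrank_top] at h2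
  have h3 : Module.finrank (ZMod 2) (ZMod 2) = 1 := Module.finrank_self _
  have h4 : Module.finrank (ZMod 2) (Vv v) = v := by
    simp [Module.finrank_pi]
  rw [h3, h4] at h2
  omega

noncomputable def ww (v : ℕ) (M : Projectivization (ZMod 2) (Vv v) → ℕ) (y : Vv v) : ℕ :=
  ∑ x ∈ Finset.univ.filter (fun x => dot x y = 1), mm v M x

lemma zmod2_not_one : ∀ u : ZMod 2, (¬ u = 1) ↔ u = 0 := by decide

lemma zmod2_add_self : ∀ u : ZMod 2, u + u = 0 := by decide

lemma card_dot_one {v : ℕ} (x : Vv v) (hx : x ≠ 0) :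
    (Finset.univ.filter (fun y => dot x y = 1)).card = 2 ^ (v - 1) := by
  classical
  obtain ⟨j, hj⟩ := Function.ne_iff.1 hx
  set s : Vv v := Pi.single j (1 : ZMod 2) with hs
  have hdots : dot x s = 1 := by rw [hs, dot_single', zmod2_ne_zero _ hj]
  have hss : ∀ z : Vv v, z + s + s = z := by
    intro z
    rw [add_assoc]
    have : s + s = 0 := funext fun i => zmod2_add_self _
    rw [this, add_zero]
  have hflip : ∀ y : Vv v, dot x (y + s) = dot x y + 1 := by
    intro y; rw [dot_add_right, hdots]
  have hcards : (Finset.univ.filter (fun y => dot x y = 1)).card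
      = (Finset.univ.filter (fun y => dot x y = 0)).card := by
    refine Finset.card_bij' (fun y _ => y + s) (fun y _ => y + s) ?_ ?_ ?_ ?_
    · intro y hy
      simp only [Finset.mem_filter, Finset.mem_univ, true_and] at hy ⊢
      rw [hflip, hy]; decide
    · intro y hy
      simp only [Finset.mem_filter, Finset.mem_univ, true_and] at hy ⊢
      rw [hflip, hy]; decide
    · intro y _; exact hss y
    · intro y _; exact hss y
  have hpart : (Finset.univ.filter (fun y => dot x y = 1)).card
      + (Finset.univ.filter (fun y => dot x y = 0)).card = 2 ^ v := by
    have h1 : (Finset.univ.filter (fun y => ¬ dot x y = 1)).card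
        = (Finset.univ.filter (fun y => dot x y = 0)).card := by
      congr 1
      apply Finset.filter_congr
      intro y _
      exact zmod2_not_one _
    rw [← h1, Finset.card_filter_add_card_filter_not, Finset.card_univ]
    rw [Fintype.card_fun]
    simp
  have hv : 0 < v := j.pos
  have h2 : 2 ^ v = 2 ^ (v - 1) * 2 := by
    rw [← pow_succ]
    congr 1
    omega
  omega

lemma sum_ww {v : ℕ} (M : Projectivization (ZMod 2) (Vv v) → ℕ)
    (htot : ∑ x : Vv v, mm v M x = 9) :
    ∑ y : Vv v, ww v M y = 9 * 2 ^ (v - 1) := by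
  classical
  have h1 : ∀ y : Vv v, ww v M y = ∑ x : Vv v, if dot x y = 1 then mm v M x else 0 :=
    fun y => Finset.sum_filter _ _
  calc ∑ y : Vv v, ww v M y
      = ∑ y : Vv v, ∑ x : Vv v, if dot x y = 1 then mm v M x else 0 := by
        exact Finset.sum_congr rfl fun y _ => h1 y
    _ = ∑ x : Vv v, ∑ y : Vv v, if dot x y = 1 then mm v M x else 0 := Finset.sum_comm
    _ = ∑ x : Vv v, mm v M x * 2 ^ (v - 1) := by
        refine Finset.sum_congr rfl fun x _ => ?_
        rw [← Finset.sum_filter]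
        rw [Finset.sum_const, smul_eq_mul]
        by_cases hx : x = 0
        · subst hx
          have : mm v M 0 = 0 := by simp [mm]
          rw [this, mul_zero, zero_mul]
        · rw [card_dot_one x hx, mul_comm]
    _ = 9 * 2 ^ (v - 1) := by rw [← Finset.sum_mul, htot]

lemma ww_zero {v : ℕ} (M : Projectivization (ZMod 2) (Vv v) → ℕ) : ww v M 0 = 0 := by
  classical
  rw [ww]
  rw [Finset.filter_false_of_mem, Finset.sum_empty]
  intro x _
  simp [dot]

lemma sum_set_congr {v : ℕ} (M : Projectivization (ZMod 2) (Vv v) → ℕ)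
    {s t : Finset (Vv v)} (h : s = t) :
    ∑ x ∈ s, mm v M x = ∑ x ∈ t, mm v M x := by rw [h]

lemma split_ab {v : ℕ} (M : Projectivization (ZMod 2) (Vv v) → ℕ) (a b : Vv v) (p : ZMod 2) :
    (∑ x ∈ Finset.univ.filter (fun x => dot x a = p), mm v M x)
    = (∑ x ∈ Finset.univ.filter (fun x => dot x a = p ∧ dot x b = 1), mm v M x)
    + (∑ x ∈ Finset.univ.filter (fun x => dot x a = p ∧ dot x b = 0), mm v M x) := by
  rw [← Finset.sum_filter_add_sum_filter_not (Finset.univ.filter (fun x => dot x a = p))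
    (fun x => dot x b = 1) (mm v M)]
  refine congrArg₂ (· + ·) (sum_set_congr M ?_) (sum_set_congr M ?_)
  · ext x
    simp only [Finset.mem_filter, Finset.mem_univ, true_and, and_assoc]
  · ext x
    simp only [Finset.mem_filter, Finset.mem_univ, true_and, zmod2_not_one, and_assoc]

lemma split_b {v : ℕ} (M : Projectivization (ZMod 2) (Vv v) → ℕ) (a b : Vv v) (q : ZMod 2) :
    (∑ x ∈ Finset.univ.filter (fun x => dot x b = q), mm v M x)
    = (∑ x ∈ Finset.univ.filter (fun x => dot x a = 1 ∧ dot x b = q), mm v M x)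
    + (∑ x ∈ Finset.univ.filter (fun x => dot x a = 0 ∧ dot x b = q), mm v M x) := by
  rw [← Finset.sum_filter_add_sum_filter_not (Finset.univ.filter (fun x => dot x b = q))
    (fun x => dot x a = 1) (mm v M)]
  refine congrArg₂ (· + ·) (sum_set_congr M ?_) (sum_set_congr M ?_)
  · ext x
    simp only [Finset.mem_filter, Finset.mem_univ, true_and]
    tauto
  · ext x
    simp only [Finset.mem_filter, Finset.mem_univ, true_and, zmod2_not_one]
    tauto

lemma total_split {v : ℕ} (M : Projectivization (ZMod 2) (Vv v) → ℕ) (b : Vv v) :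
    (∑ x : Vv v, mm v M x)
    = (∑ x ∈ Finset.univ.filter (fun x => dot x b = 1), mm v M x)
    + (∑ x ∈ Finset.univ.filter (fun x => dot x b = 0), mm v M x) := by
  rw [← Finset.sum_filter_add_sum_filter_not Finset.univ (fun x => dot x b = 1) (mm v M)]
  refine congrArg₂ (· + ·) rfl (sum_set_congr M ?_)
  ext x
  simp only [Finset.mem_filter, Finset.mem_univ, true_and, zmod2_not_one]

lemma ww_add {v : ℕ} (M : Projectivization (ZMod 2) (Vv v) → ℕ) (a b : Vv v) :
    ww v M (a + b)
    = (∑ x ∈ Finset.univ.filter (fun x => dot x a = 1 ∧ dot x b = 0), mm v M x)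
    + (∑ x ∈ Finset.univ.filter (fun x => dot x a = 0 ∧ dot x b = 1), mm v M x) := by
  rw [ww]
  have hfe : Finset.univ.filter (fun x : Vv v => dot x (a + b) = 1) =
      (Finset.univ.filter (fun x => dot x a = 1 ∧ dot x b = 0)) ∪
      (Finset.univ.filter (fun x => dot x a = 0 ∧ dot x b = 1)) := by
    ext x
    simp only [Finset.mem_filter, Finset.mem_univ, true_and, Finset.mem_union]
    rw [dot_add_right]
    exact (by decide : ∀ u w : ZMod 2, u + w = 1 ↔ ((u = 1 ∧ w = 0) ∨ (u = 0 ∧ w = 1))) _ _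
  rw [sum_set_congr M hfe, Finset.sum_union]
  rw [Finset.disjoint_left]
  intro x h1 h2
  simp only [Finset.mem_filter, Finset.mem_univ, true_and] at h1 h2
  exact one_ne_zero (h1.1 ▸ h2.1 ▸ rfl : (1 : ZMod 2) = 0)

lemma ww_add_eq_zero {v : ℕ} (M : Projectivization (ZMod 2) (Vv v) → ℕ) (a b : Vv v)
    (htot : ∑ x : Vv v, mm v M x = 9)
    (ha : ww v M a = 8) (hb : ww v M b = 8)
    (hab : ww v M (a + b) = 0 ∨ ww v M (a + b) = 4 ∨ ww v M (a + b) = 8) :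
    ww v M (a + b) = 0 := by
  simp only [ww] at ha hb
  rw [split_ab M a b 1] at ha
  rw [split_b M a b 1] at hb
  have hC := ww_add M a b
  have hT := total_split M b
  rw [htot, split_b M a b 1, split_b M a b 0] at hT
  omega

end Stmt12Aux

open Stmt12Aux in
theorem stmt_12 (v : ℕ) (M : Projectivization (ZMod 2) (Fin v → ZMod 2) → ℕ)
    (hdiv : IsDivisible 4 M) : MVal M ⊤ ≠ 9 := by
  intro h9
  classical
  have htot : ∑ x : Vv v, mm v M x = 9 := by
    have h := mval_eq M ⊤
    rw [h9] at h
    rw [Finset.filter_true_of_mem (fun x _ => Submodule.mem_top)] at h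
    exact h.symm
  have hv : 0 < v := by
    rcases Nat.eq_zero_or_pos v with h0 | h
    · exfalso
      subst h0
      rw [Finset.sum_eq_zero (fun x _ => by
        have hx : x = (0 : Vv 0) := funext fun i => i.elim0
        rw [hx]; simp [mm])] at htot
      omega
    · exact h
  have hr : Module.finrank (ZMod 2) (Fin v → ZMod 2) = v := by
    simp [Module.finrank_pi]
  have Hw : ∀ y : Vv v, ww v M y = 0 ∨ ww v M y = 4 ∨ ww v M y = 8 := by
    intro y
    by_cases hy : y = 0
    · left; rw [hy]; exact ww_zero M
    · have h1 := hdiv (LinearMap.ker (phi y)) (by rw [hr]; exact finrank_ker y hy)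
      have h1' : MVal M (LinearMap.ker (phi y))
          = ∑ x ∈ Finset.univ.filter (fun x : Vv v => dot x y = 0), mm v M x :=
        (mval_eq M _).trans (sum_set_congr M (by
          ext x
          simp only [Finset.mem_filter, Finset.mem_univ, true_and, LinearMap.mem_ker]
          rw [phi_apply]))
      rw [h9, h1'] at h1
      have h4 : (∑ x ∈ Finset.univ.filter (fun x : Vv v => dot x y = 0), mm v M x) % 4
          = 9 % 4 := h1
      have h3 := total_split M y
      rw [htot] at h3
      have h5 : ww v M y
          = ∑ x ∈ Finset.univ.filter (fun x : Vv v => dot x y = 1), mm v M x := by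
        simp only [ww]
      omega
  have hsum : ∑ y : Vv v, ww v M y = 9 * 2 ^ (v - 1) := sum_ww M htot
  -- counting
  have e1a : (Finset.univ.filter (fun y : Vv v => ww v M y = 0)).card
      + (Finset.univ.filter (fun y : Vv v => ¬ ww v M y = 0)).card = 2 ^ v := by
    rw [Finset.card_filter_add_card_filter_not, Finset.card_univ, Fintype.card_fun]
    simp
  have e1b : Finset.univ.filter (fun y : Vv v => ¬ ww v M y = 0)
      = (Finset.univ.filter (fun y : Vv v => ww v M y = 4))
        ∪ (Finset.univ.filter (fun y : Vv v => ww v M y = 8)) := by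
    ext y
    simp only [Finset.mem_filter, Finset.mem_univ, true_and, Finset.mem_union]
    have := Hw y
    omega
  have hdisj : Disjoint (Finset.univ.filter (fun y : Vv v => ww v M y = 4))
      (Finset.univ.filter (fun y : Vv v => ww v M y = 8)) := by
    rw [Finset.disjoint_left]
    intro y hy1 hy2
    simp only [Finset.mem_filter, Finset.mem_univ, true_and] at hy1 hy2
    omega
  have e1c : ((Finset.univ.filter (fun y : Vv v => ww v M y = 4))
      ∪ (Finset.univ.filter (fun y : Vv v => ww v M y = 8))).card
      = (Finset.univ.filter (fun y : Vv v => ww v M y = 4)).card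
      + (Finset.univ.filter (fun y : Vv v => ww v M y = 8)).card :=
    Finset.card_union_of_disjoint hdisj
  have hA : (Finset.univ.filter (fun y : Vv v => ww v M y = 0)).card
      + ((Finset.univ.filter (fun y : Vv v => ww v M y = 4)).card
      + (Finset.univ.filter (fun y : Vv v => ww v M y = 8)).card) = 2 ^ v := by
    rw [← e1c, ← e1b]
    exact e1a
  have hB : 4 * (Finset.univ.filter (fun y : Vv v => ww v M y = 4)).card
      + 8 * (Finset.univ.filter (fun y : Vv v => ww v M y = 8)).card
      = 9 * 2 ^ (v - 1) := by
    rw [← hsum]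
    rw [← Finset.sum_filter_add_sum_filter_not Finset.univ (fun y : Vv v => ww v M y = 0)
      (ww v M)]
    have hz : ∑ y ∈ Finset.univ.filter (fun y : Vv v => ww v M y = 0), ww v M y = 0 :=
      Finset.sum_eq_zero (fun y hy => by
        simp only [Finset.mem_filter, Finset.mem_univ, true_and] at hy
        exact hy)
    rw [hz, zero_add, e1b, Finset.sum_union hdisj]
    have h4' : ∑ y ∈ Finset.univ.filter (fun y : Vv v => ww v M y = 4), ww v M y
        = 4 * (Finset.univ.filter (fun y : Vv v => ww v M y = 4)).card := by
      rw [Finset.sum_congr rfl (fun y hy => by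
        simp only [Finset.mem_filter, Finset.mem_univ, true_and] at hy
        exact hy)]
      rw [Finset.sum_const, smul_eq_mul, mul_comm]
    have h8' : ∑ y ∈ Finset.univ.filter (fun y : Vv v => ww v M y = 8), ww v M y
        = 8 * (Finset.univ.filter (fun y : Vv v => ww v M y = 8)).card := by
      rw [Finset.sum_congr rfl (fun y hy => by
        simp only [Finset.mem_filter, Finset.mem_univ, true_and] at hy
        exact hy)]
      rw [Finset.sum_const, smul_eq_mul, mul_comm]
    rw [h4', h8']
  have hD : 1 ≤ (Finset.univ.filter (fun y : Vv v => ww v M y = 0)).card :=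
    Finset.card_pos.2 ⟨0, by
      simp only [Finset.mem_filter, Finset.mem_univ, true_and]
      exact ww_zero M⟩
  have hC : (Finset.univ.filter (fun y : Vv v => ww v M y = 8)).card = 0
      ∨ (Finset.univ.filter (fun y : Vv v => ww v M y = 8)).card
        ≤ (Finset.univ.filter (fun y : Vv v => ww v M y = 0)).card := by
    by_cases h8 : Finset.univ.filter (fun y : Vv v => ww v M y = 8) = ∅
    · left; rw [h8]; rfl
    · right
      obtain ⟨b, hb⟩ := Finset.nonempty_iff_ne_empty.2 h8
      have hb' : ww v M b = 8 := by
        simp only [Finset.mem_filter, Finset.mem_univ, true_and] at hb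
        exact hb
      refine Finset.card_le_card_of_injOn (fun a => a + b) ?_ ?_
      · intro a ha
        simp only [Finset.mem_coe, Finset.mem_filter, Finset.mem_univ, true_and] at ha ⊢
        exact ww_add_eq_zero M a b htot ha hb' (Hw _)
      · intro a1 _ a2 _ h
        exact add_right_cancel h
  have hE : 2 ^ v = 2 ^ (v - 1) * 2 := by
    rw [← pow_succ]
    congr 1
    omega
  have hF : 0 < 2 ^ (v - 1) := pow_pos (by norm_num) _
  omega
end
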